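/- arXiv:2008.06829 — 3 statements merged into one kernel-verified Lean document; each statement's English description precedes it below -/
import Mathlib

section
/- For every real δ > 1, every real ε > 0, and every positive integer k with πεk ≤ 2/5, the Laplace slender-body PDE eigenvalue λ = 2π²εk·K₁(πεk)/K₀(πεk) and the δ-regularized eigenvalue λ^δ = 2π/(log δ + K₀(δπεk)) satisfy the refined bound |λ − λ^δ| ≤ 82·π³·δ²·(1 + log δ)·ε²·k². -/
open Real

/-- Modified Bessel function of the second kind of order `j`:
`K_j(z) = ∫₀^∞ exp (−z cosh t) * cosh (j t) dt`. -/
noncomputable def besselK (j : ℕ) (z : ℝ) : ℝ :=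
  ∫ t in Set.Ioi (0 : ℝ), Real.exp (-z * Real.cosh t) * Real.cosh ((j : ℝ) * t)

namespace BesselAux

open MeasureTheory Set Filter

lemma cosh_le_exp_self {t : ℝ} (ht : 0 ≤ t) : Real.cosh t ≤ Real.exp t := by
  rw [Real.cosh_eq]
  have := Real.exp_le_exp.2 (neg_le_self ht)
  linarith

lemma exp_half_le_cosh (t : ℝ) : Real.exp t / 2 ≤ Real.cosh t := by
  rw [Real.cosh_eq]
  have := (Real.exp_pos (-t)).le
  linarith

lemma integrableOn_K (z c : ℝ) (hz : 0 < z) (hc0 : 0 ≤ c) (hc1 : c ≤ 1) :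
    IntegrableOn (fun t => Real.exp (-z * Real.cosh t) * Real.cosh (c * t)) (Set.Ioi 0) := by
  have hzne : z ≠ 0 := ne_of_gt hz
  have hg : IntegrableOn (fun t => Real.exp (-(z/2) * Real.exp t) * Real.exp t) (Set.Ioi 0) := by
    apply integrableOn_Ioi_deriv_of_nonneg (g := fun t => (-(2/z)) * Real.exp (-(z/2) * Real.exp t))
      (l := 0)
    · apply Continuous.continuousWithinAt
      fun_prop
    · intro x hx
      have h1 : HasDerivAt (fun t : ℝ => -(z/2) * Real.exp t) (-(z/2) * Real.exp x) x :=
        (Real.hasDerivAt_exp x).const_mul _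
      have h2 := h1.exp
      have h3 := h2.const_mul (-(2/z))
      refine h3.congr_deriv ?_
      have h4 : -(2/z) * (-(z/2)) = (1:ℝ) := by field_simp
      linear_combination (Real.exp (-(z/2) * Real.exp x) * Real.exp x) * h4
    · intro x hx
      positivity
    · have h1 : Tendsto (fun t : ℝ => -(z/2) * Real.exp t) atTop atBot := by
        apply Tendsto.const_mul_atTop_of_neg (by linarith : -(z/2) < 0) Real.tendsto_exp_atTop
      have h2 := Real.tendsto_exp_atBot.comp h1
      have h3 := h2.const_mul (-(2/z))
      simpa using h3
  apply hg.mono'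
  · apply Continuous.aestronglyMeasurable
    fun_prop
  · rw [ae_restrict_iff' measurableSet_Ioi]
    filter_upwards with t ht
    have ht' : (0:ℝ) ≤ t := le_of_lt ht
    have hct : 0 ≤ c * t := mul_nonneg hc0 ht'
    rw [Real.norm_eq_abs, abs_of_nonneg (by positivity)]
    have hb1 : Real.exp (-z * Real.cosh t) ≤ Real.exp (-(z/2) * Real.exp t) := by
      apply Real.exp_le_exp.2
      have := exp_half_le_cosh t
      nlinarith
    have hb2 : Real.cosh (c * t) ≤ Real.exp t := by
      calc Real.cosh (c*t) ≤ Real.exp (c*t) := cosh_le_exp_self hct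
        _ ≤ Real.exp t := Real.exp_le_exp.2 (by nlinarith)
    exact mul_le_mul hb1 hb2 (Real.cosh_pos _).le (Real.exp_pos _).le

lemma int_K0 {z : ℝ} (hz : 0 < z) :
    IntegrableOn (fun t => Real.exp (-z * Real.cosh t)) (Set.Ioi 0) := by
  have := integrableOn_K z 0 hz le_rfl zero_le_one
  simpa using this

lemma int_K1 {z : ℝ} (hz : 0 < z) :
    IntegrableOn (fun t => Real.exp (-z * Real.cosh t) * Real.cosh t) (Set.Ioi 0) := by
  have := integrableOn_K z 1 hz zero_le_one le_rfl
  simpa using this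

lemma sinh_le_cosh' (t : ℝ) : Real.sinh t ≤ Real.cosh t := by
  have h := Real.cosh_sub_sinh t
  have := (Real.exp_pos (-t)).le
  linarith

lemma int_sinh {z : ℝ} (hz : 0 < z) :
    IntegrableOn (fun t => Real.exp (-z * Real.cosh t) * Real.sinh t) (Set.Ioi 0) := by
  apply (int_K1 hz).mono'
  · apply Continuous.aestronglyMeasurable; fun_prop
  · rw [ae_restrict_iff' measurableSet_Ioi]
    filter_upwards with t ht
    rw [Real.norm_eq_abs, abs_of_nonneg
      (mul_nonneg (Real.exp_pos _).le (Real.sinh_nonneg_iff.2 ht.le))]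
    exact mul_le_mul_of_nonneg_left (sinh_le_cosh' t) (Real.exp_pos _).le

lemma int_expneg_cosh {z : ℝ} (hz : 0 < z) :
    IntegrableOn (fun t => Real.exp (-z * Real.cosh t) * Real.exp (-t)) (Set.Ioi 0) := by
  have hg : IntegrableOn (fun t : ℝ => Real.exp (-t)) (Set.Ioi 0) :=
    exp_neg_integrableOn_Ioi 0 one_pos |>.congr_fun (by intro x hx; simp) measurableSet_Ioi
  apply hg.mono'
  · apply Continuous.aestronglyMeasurable; fun_prop
  · filter_upwards with t
    rw [Real.norm_eq_abs, abs_of_nonneg (by positivity)]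
    nlinarith [Real.exp_pos (-t), Real.exp_le_one_iff.2
      (by nlinarith [Real.cosh_pos t] : -z * Real.cosh t ≤ 0), Real.exp_pos (-z * Real.cosh t)]

noncomputable def Iaux (z : ℝ) : ℝ :=
  ∫ t in Set.Ioi (0:ℝ), Real.exp (-z * Real.cosh t) * Real.exp (-t)

lemma sinh_integral {z : ℝ} (hz : 0 < z) :
    ∫ t in Set.Ioi (0:ℝ), Real.exp (-z * Real.cosh t) * Real.sinh t = Real.exp (-z) / z := by
  have key := integral_Ioi_of_hasDerivAt_of_tendsto
    (f := fun t => -(1/z) * Real.exp (-z * Real.cosh t))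
    (f' := fun t => Real.exp (-z * Real.cosh t) * Real.sinh t) (a := 0) (m := 0)
    ?cont ?deriv (int_sinh hz) ?tend
  · rw [key]
    simp [Real.cosh_zero]
    ring
  case cont => apply Continuous.continuousWithinAt; fun_prop
  case deriv =>
    intro x hx
    have h1 : HasDerivAt (fun t : ℝ => -z * Real.cosh t) (-z * Real.sinh x) x :=
      (Real.hasDerivAt_cosh x).const_mul _
    have h2 := (h1.exp).const_mul (-(1/z))
    refine h2.congr_deriv ?_
    have h4 : -(1/z) * (-z) = (1:ℝ) := by field_simp
    linear_combination (Real.exp (-z * Real.cosh x) * Real.sinh x) * h4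
  case tend =>
    have hch : Tendsto Real.cosh atTop atTop := by
      apply tendsto_atTop_mono (fun t => exp_half_le_cosh t)
      exact (Real.tendsto_exp_atTop).atTop_div_const two_pos
    have h1 : Tendsto (fun t : ℝ => -z * Real.cosh t) atTop atBot :=
      Tendsto.const_mul_atTop_of_neg (by linarith) hch
    have h2 := Real.tendsto_exp_atBot.comp h1
    have h3 := h2.const_mul (-(1/z))
    simpa using h3

lemma sK1_eq {z : ℝ} (hz : 0 < z) :
    z * besselK 1 z = Real.exp (-z) + z * Iaux z := by
  have hsplit : besselK 1 z = Real.exp (-z) / z + Iaux z := by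
    rw [besselK, Iaux]
    have : ∀ t : ℝ, Real.exp (-z * Real.cosh t) * Real.cosh ((1:ℕ) * t)
        = Real.exp (-z * Real.cosh t) * Real.sinh t
          + Real.exp (-z * Real.cosh t) * Real.exp (-t) := by
      intro t
      have := Real.cosh_sub_sinh t
      push_cast
      rw [one_mul]
      nlinarith [Real.exp_pos (-z * Real.cosh t)]
    rw [show (fun t => Real.exp (-z * Real.cosh t) * Real.cosh (((1:ℕ):ℝ) * t)) = _
      from funext this]
    rw [integral_add (int_sinh hz) (int_expneg_cosh hz), sinh_integral hz]
  rw [hsplit]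
  field_simp

lemma int_expneg : IntegrableOn (fun t : ℝ => Real.exp (-t)) (Set.Ioi 0) :=
  exp_neg_integrableOn_Ioi 0 one_pos |>.congr_fun (by intro x hx; simp) measurableSet_Ioi

lemma cosh_mul_exp_neg_le_one {t : ℝ} (ht : 0 ≤ t) : Real.cosh t * Real.exp (-t) ≤ 1 := by
  have h := mul_le_mul_of_nonneg_right (cosh_le_exp_self ht) (Real.exp_pos (-t)).le
  rw [← Real.exp_add] at h
  simpa using h

lemma Iaux_sub (z : ℝ) (hz : 0 < z) :
    1 - Iaux z = ∫ t in Set.Ioi (0:ℝ), (1 - Real.exp (-z * Real.cosh t)) * Real.exp (-t) := by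
  have hone : ∫ t in Set.Ioi (0:ℝ), Real.exp (-t) = 1 := by
    rw [integral_exp_neg_Ioi]; simp
  rw [Iaux]
  conv_lhs => rw [← hone]
  rw [← integral_sub int_expneg (int_expneg_cosh hz)]
  congr 1; funext t; ring

lemma int_one_sub {z : ℝ} (hz : 0 < z) :
    IntegrableOn (fun t => (1 - Real.exp (-z * Real.cosh t)) * Real.exp (-t)) (Set.Ioi 0) := by
  have h := int_expneg.sub (int_expneg_cosh hz)
  apply h.congr
  filter_upwards with x
  simp only [Pi.sub_apply]
  ring

lemma Iaux_sub_nonneg (z : ℝ) (hz : 0 < z) : 0 ≤ 1 - Iaux z := by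
  rw [Iaux_sub z hz]
  apply setIntegral_nonneg measurableSet_Ioi
  intro t ht
  have h1 : Real.exp (-z * Real.cosh t) ≤ 1 :=
    Real.exp_le_one_iff.2 (by nlinarith [Real.cosh_pos t])
  nlinarith [Real.exp_pos (-t)]

lemma Iaux_sub_le_one (z : ℝ) (hz : 0 < z) : 1 - Iaux z ≤ 1 := by
  rw [Iaux_sub z hz]
  have hone : ∫ t in Set.Ioi (0:ℝ), Real.exp (-t) = 1 := by
    rw [integral_exp_neg_Ioi]; simp
  calc ∫ t in Set.Ioi (0:ℝ), (1 - Real.exp (-z * Real.cosh t)) * Real.exp (-t)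
      ≤ ∫ t in Set.Ioi (0:ℝ), Real.exp (-t) := by
        apply setIntegral_mono_on (int_one_sub hz) int_expneg measurableSet_Ioi
        intro t ht
        nlinarith [Real.exp_pos (-z * Real.cosh t), Real.exp_pos (-t)]
    _ = 1 := hone

lemma Iaux_sub_le (z : ℝ) (hz : 0 < z) (hz1 : z ≤ 1) :
    1 - Iaux z ≤ z * (Real.log (1/z) + 1) := by
  set T := Real.log (1/z) with hT
  have hT0 : 0 ≤ T := Real.log_nonneg (by rw [le_div_iff₀ hz]; linarith)
  have hexpT : Real.exp (-T) = z := by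
    rw [hT, one_div, Real.log_inv, neg_neg, Real.exp_log hz]
  rw [Iaux_sub z hz]
  have hsplit : Set.Ioi (0:ℝ) = Set.Ioc 0 T ∪ Set.Ioi T := (Set.Ioc_union_Ioi_eq_Ioi hT0).symm
  have hint := int_one_sub hz
  rw [hsplit, setIntegral_union (Set.Ioc_disjoint_Ioi le_rfl) measurableSet_Ioi
    (hint.mono_set (by rw [hsplit]; exact subset_union_left))
    (hint.mono_set (by rw [hsplit]; exact subset_union_right))]
  have hconst : ∫ _t in Set.Ioc (0:ℝ) T, z = T * z := by
    rw [setIntegral_const, smul_eq_mul, Real.volume_real_Ioc_of_le (by linarith)]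
    ring
  have h1 : ∫ t in Set.Ioc (0:ℝ) T, (1 - Real.exp (-z * Real.cosh t)) * Real.exp (-t) ≤ T * z := by
    rw [← hconst]
    apply setIntegral_mono_on
      (hint.mono_set (by rw [hsplit]; exact subset_union_left))
      (integrableOn_const (by rw [Real.volume_Ioc]; exact ENNReal.ofReal_ne_top))
      measurableSet_Ioc
    intro t ht
    have ht0 : 0 < t := ht.1
    have h2 : 1 - Real.exp (-z * Real.cosh t) ≤ z * Real.cosh t := by
      have := Real.add_one_le_exp (-z * Real.cosh t)
      linarith
    have h3 := cosh_mul_exp_neg_le_one ht0.le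
    have h4 : (1 - Real.exp (-z * Real.cosh t)) * Real.exp (-t)
        ≤ z * (Real.cosh t * Real.exp (-t)) := by
      nlinarith [Real.exp_pos (-t)]
    nlinarith
  have h2 : ∫ t in Set.Ioi T, (1 - Real.exp (-z * Real.cosh t)) * Real.exp (-t) ≤ z := by
    calc ∫ t in Set.Ioi T, (1 - Real.exp (-z * Real.cosh t)) * Real.exp (-t)
        ≤ ∫ t in Set.Ioi T, Real.exp (-t) := by
          apply setIntegral_mono_on
            (hint.mono_set (by rw [hsplit]; exact subset_union_right))
            (int_expneg.mono_set (Set.Ioi_subset_Ioi hT0)) measurableSet_Ioi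
          intro t ht
          nlinarith [Real.exp_pos (-z * Real.cosh t), Real.exp_pos (-t)]
      _ = z := by rw [integral_exp_neg_Ioi, hexpT]
  linarith

lemma exp_neg_quad {s : ℝ} (hs : 0 ≤ s) :
    0 ≤ Real.exp (-s) - 1 + s ∧ Real.exp (-s) - 1 + s ≤ s^2/2 := by
  constructor
  · have := Real.add_one_le_exp (-s); linarith
  · have hsum := Real.sum_le_exp_of_nonneg hs 3
    have hq : 1 + s + s^2/2 ≤ Real.exp s := by
      simp [Finset.sum_range_succ, Nat.factorial] at hsum
      nlinarith [hsum]
    have h1 : Real.exp (-s) * Real.exp s = 1 := by rw [← Real.exp_add]; simp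
    nlinarith [Real.exp_pos (-s), Real.exp_pos s, hq, h1,
      mul_le_mul_of_nonneg_left hq (Real.exp_pos (-s)).le]

lemma cosh_mono_nonneg {a b : ℝ} (ha : 0 ≤ a) (hab : a ≤ b) : Real.cosh a ≤ Real.cosh b := by
  rw [Real.cosh_eq, Real.cosh_eq]
  have h1 : Real.exp a ≤ Real.exp b := Real.exp_le_exp.2 hab
  have h2 : (1:ℝ) ≤ Real.exp a := by
    rw [← Real.exp_zero]; exact Real.exp_le_exp.2 ha
  have h3 := Real.exp_neg a
  have h4 := Real.exp_neg b
  have h5 : (0:ℝ) < Real.exp a := Real.exp_pos a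
  have h6 : (0:ℝ) < Real.exp b := Real.exp_pos b
  rw [h3, h4]
  have hu : (Real.exp a)⁻¹ ≤ 1 := by
    rw [inv_le_one_iff₀]; right; exact h2
  have hv : (Real.exp b)⁻¹ ≤ 1 := by
    rw [inv_le_one_iff₀]; right; linarith
  have key : Real.exp b + (Real.exp b)⁻¹ - (Real.exp a + (Real.exp a)⁻¹)
      = (Real.exp b - Real.exp a) * (1 - (Real.exp a)⁻¹ * (Real.exp b)⁻¹) := by
    field_simp
    ring
  have hunn : (0:ℝ) ≤ (Real.exp a)⁻¹ := by positivity
  have hvnn : (0:ℝ) ≤ (Real.exp b)⁻¹ := by positivity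
  nlinarith [mul_nonneg (sub_nonneg.2 h1)
    (by nlinarith : (0:ℝ) ≤ 1 - (Real.exp a)⁻¹ * (Real.exp b)⁻¹)]

lemma besselK0_eq {z : ℝ} :
    besselK 0 z = ∫ t in Set.Ioi (0:ℝ), Real.exp (-z * Real.cosh t) := by
  rw [besselK]; congr 1; funext t; simp

lemma besselK1_eq {z : ℝ} :
    besselK 1 z = ∫ t in Set.Ioi (0:ℝ), Real.exp (-z * Real.cosh t) * Real.cosh t := by
  rw [besselK]; congr 1; funext t; simp

lemma besselK0_lower {w : ℝ} (hw : 0 < w) (hw1 : w < 1) :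
    Real.exp (-1) * Real.log (1/w) ≤ besselK 0 w := by
  set T := Real.log (1/w) with hT
  have hT0 : 0 < T := Real.log_pos (by rw [lt_div_iff₀ hw]; linarith)
  have hexpT : Real.exp T = 1/w := Real.exp_log (by positivity)
  have hexpnT : Real.exp (-T) = w := by
    rw [hT, one_div, Real.log_inv, neg_neg, Real.exp_log hw]
  rw [besselK0_eq]
  have hcoshT : w * Real.cosh T = (1 + w^2)/2 := by
    rw [Real.cosh_eq, hexpT, Real.exp_neg, hexpT]
    field_simp
  have step1 : ∫ t in Set.Ioc (0:ℝ) T, Real.exp (-w * Real.cosh t)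
      ≤ ∫ t in Set.Ioi (0:ℝ), Real.exp (-w * Real.cosh t) := by
    apply setIntegral_mono_set (int_K0 hw)
    · filter_upwards with t using (Real.exp_pos _).le
    · exact HasSubset.Subset.eventuallyLE Set.Ioc_subset_Ioi_self
  have step2 : T * Real.exp (-(1 + w^2)/2)
      ≤ ∫ t in Set.Ioc (0:ℝ) T, Real.exp (-w * Real.cosh t) := by
    have hconst : ∫ _t in Set.Ioc (0:ℝ) T, Real.exp (-(1 + w^2)/2)
        = T * Real.exp (-(1 + w^2)/2) := by
      rw [setIntegral_const, smul_eq_mul, Real.volume_real_Ioc_of_le (by linarith)]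
      ring
    rw [← hconst]
    apply setIntegral_mono_on
      (integrableOn_const (by rw [Real.volume_Ioc]; exact ENNReal.ofReal_ne_top))
      ((int_K0 hw).mono_set Set.Ioc_subset_Ioi_self) measurableSet_Ioc
    intro t ht
    apply Real.exp_le_exp.2
    have := cosh_mono_nonneg ht.1.le ht.2
    nlinarith
  have hfinal : Real.exp (-1) ≤ Real.exp (-(1 + w^2)/2) := by
    apply Real.exp_le_exp.2
    nlinarith
  calc Real.exp (-1) * T ≤ Real.exp (-(1+w^2)/2) * T := by nlinarith
    _ = T * Real.exp (-(1+w^2)/2) := by ring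
    _ ≤ _ := le_trans step2 step1

lemma besselK_nonneg (j : ℕ) (w : ℝ) : 0 ≤ besselK j w := by
  rw [besselK]
  apply setIntegral_nonneg measurableSet_Ioi
  intro t ht
  exact mul_nonneg (Real.exp_pos _).le (Real.cosh_pos _).le

lemma hasDerivAt_besselK0 {s : ℝ} (hs : 0 < s) :
    HasDerivAt (besselK 0) (-(besselK 1 s)) s := by
  have key := hasDerivAt_integral_of_dominated_loc_of_deriv_le
    (μ := volume.restrict (Set.Ioi (0:ℝ))) (x₀ := s)
    (F := fun x t => Real.exp (-x * Real.cosh t))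
    (F' := fun x t => -(Real.cosh t * Real.exp (-x * Real.cosh t)))
    (bound := fun t => Real.exp (-(s/2) * Real.cosh t) * Real.cosh t)
    (Metric.ball_mem_nhds s (half_pos hs)) ?meas ?int ?meas' ?bnd ?bint ?diff
  case meas =>
    filter_upwards with x
    exact (Continuous.aestronglyMeasurable (by fun_prop))
  case int => exact int_K0 hs
  case meas' => exact (Continuous.aestronglyMeasurable (by fun_prop))
  case bnd =>
    filter_upwards with t
    intro x hx
    rw [Metric.mem_ball, Real.dist_eq, abs_lt] at hx
    have hx2 : s/2 ≤ x := by linarith [hx.1]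
    rw [norm_neg, Real.norm_eq_abs, abs_of_nonneg (by positivity)]
    rw [mul_comm (Real.exp _) (Real.cosh t)]
    apply mul_le_mul_of_nonneg_left _ (Real.cosh_pos t).le
    apply Real.exp_le_exp.2
    nlinarith [Real.cosh_pos t]
  case bint => exact int_K1 (half_pos hs)
  case diff =>
    filter_upwards with t
    intro x hx
    have h1 : HasDerivAt (fun x : ℝ => -x * Real.cosh t) (-Real.cosh t) x := by
      simpa using (hasDerivAt_neg x).mul_const (Real.cosh t)
    have h2 := h1.exp
    exact h2.congr_deriv (by ring)
  obtain ⟨-, hd⟩ := key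
  have h3 : (∫ t in Set.Ioi (0:ℝ), -(Real.cosh t * Real.exp (-s * Real.cosh t)))
      = -(besselK 1 s) := by
    rw [integral_neg, besselK1_eq]
    congr 1; congr 1; funext t; ring
  rw [h3] at hd
  have hfun : besselK 0 = fun n => ∫ (a : ℝ) in Ioi 0, rexp (-n * cosh a) := by
    funext x
    rw [besselK0_eq]
  rw [hfun]; exact hd

lemma besselK1_antitoneOn {z : ℝ} (hz : 0 < z) :
    AntitoneOn (besselK 1) (Set.Ici z) := by
  intro a ha b hb hab
  have haz : 0 < a := lt_of_lt_of_le hz ha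
  have hbz : 0 < b := lt_of_lt_of_le hz hb
  rw [besselK1_eq, besselK1_eq]
  apply setIntegral_mono_on (int_K1 hbz) (int_K1 haz) measurableSet_Ioi
  intro t ht
  have := Real.cosh_pos t
  apply mul_le_mul_of_nonneg_right _ this.le
  apply Real.exp_le_exp.2
  nlinarith

lemma besselK0_sub_integral {z w : ℝ} (hz : 0 < z) (hzw : z ≤ w) :
    besselK 0 z - besselK 0 w = ∫ s in z..w, besselK 1 s := by
  have huIcc : Set.uIcc z w = Set.Icc z w := Set.uIcc_of_le hzw
  have hftc := intervalIntegral.integral_eq_sub_of_hasDerivAt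
    (f := besselK 0) (f' := fun s => -(besselK 1 s)) (a := z) (b := w)
    ?deriv ?intg
  · rw [intervalIntegral.integral_neg] at hftc
    linarith [hftc]
  case deriv =>
    intro x hx
    rw [huIcc] at hx
    exact hasDerivAt_besselK0 (lt_of_lt_of_le hz hx.1)
  case intg =>
    apply IntervalIntegrable.neg
    apply AntitoneOn.intervalIntegrable
    intro a ha b hb hab
    rw [huIcc] at ha hb
    exact besselK1_antitoneOn hz (Set.mem_Ici.2 ha.1) (Set.mem_Ici.2 hb.1) hab

lemma sK1_abs {s : ℝ} (hs : 0 < s) :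
    |s * besselK 1 s - 1| ≤ s^2/2 + s * (1 - Iaux s) := by
  have hid := sK1_eq hs
  have hq := exp_neg_quad hs.le
  have hJ := Iaux_sub_nonneg s hs
  rw [abs_le]
  constructor
  · nlinarith
  · nlinarith

lemma K1_pointwise {z s : ℝ} (hz : 0 < z) (hz1 : z ≤ 1) (hzs : z ≤ s) :
    |besselK 1 s - 1/s| ≤ s * (Real.log (1/z) + 3/2) := by
  have hs : 0 < s := lt_of_lt_of_le hz hzs
  have hL0 : 0 ≤ Real.log (1/z) := Real.log_nonneg (by
    rw [le_div_iff₀ hz]; linarith)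
  have hJ : 1 - Iaux s ≤ s * (Real.log (1/z) + 1) := by
    rcases le_or_gt s 1 with h1 | h1
    · calc 1 - Iaux s ≤ s * (Real.log (1/s) + 1) := Iaux_sub_le s hs h1
        _ ≤ s * (Real.log (1/z) + 1) := by
          have : Real.log (1/s) ≤ Real.log (1/z) := by
            apply Real.log_le_log (by positivity)
            rw [div_le_div_iff₀ hs hz]
            nlinarith
          nlinarith
    · calc 1 - Iaux s ≤ 1 := Iaux_sub_le_one s hs
        _ ≤ s * (Real.log (1/z) + 1) := by nlinarith
  have habs := sK1_abs hs
  have hJ0 := Iaux_sub_nonneg s hs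
  have key : |s * besselK 1 s - 1| ≤ s^2 * (Real.log (1/z) + 3/2) := by
    calc |s * besselK 1 s - 1| ≤ s^2/2 + s * (1 - Iaux s) := habs
      _ ≤ s^2/2 + s * (s * (Real.log (1/z) + 1)) := by nlinarith
      _ = s^2 * (Real.log (1/z) + 3/2) := by ring
  have heq : besselK 1 s - 1/s = (s * besselK 1 s - 1) / s := by
    field_simp
  rw [heq, abs_div, abs_of_pos hs]
  rw [div_le_iff₀ hs]
  calc |s * besselK 1 s - 1| ≤ s^2 * (Real.log (1/z) + 3/2) := key
    _ = s * (Real.log (1/z) + 3/2) * s := by ring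

lemma d_bound {z w : ℝ} (hz : 0 < z) (hz1 : z ≤ 1) (hzw : z ≤ w) :
    |Real.log (w/z) - (besselK 0 z - besselK 0 w)| ≤ (Real.log (1/z) + 3/2) * w^2 / 2 := by
  have hw : 0 < w := lt_of_lt_of_le hz hzw
  have hL0 : 0 ≤ Real.log (1/z) := Real.log_nonneg (by rw [le_div_iff₀ hz]; linarith)
  have hlog : Real.log (w/z) = ∫ s in z..w, 1/s := by
    rw [integral_one_div]
    intro h
    rw [Set.uIcc_of_le hzw] at h
    exact absurd h.1 (by linarith)
  have hint1 : IntervalIntegrable (fun s : ℝ => 1/s) volume z w := by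
    apply ContinuousOn.intervalIntegrable
    apply ContinuousOn.div continuousOn_const continuousOn_id
    intro x hx
    rw [Set.uIcc_of_le hzw] at hx
    exact ne_of_gt (lt_of_lt_of_le hz hx.1)
  have hint2 : IntervalIntegrable (besselK 1) volume z w := by
    apply AntitoneOn.intervalIntegrable
    intro a ha b hb hab
    rw [Set.uIcc_of_le hzw] at ha hb
    exact besselK1_antitoneOn hz (Set.mem_Ici.2 ha.1) (Set.mem_Ici.2 hb.1) hab
  rw [besselK0_sub_integral hz hzw, hlog,
    ← intervalIntegral.integral_sub hint1 hint2]
  have hf : IntervalIntegrable (fun s : ℝ => 1/s - besselK 1 s) volume z w := hint1.sub hint2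
  calc |∫ s in z..w, (1/s - besselK 1 s)|
      ≤ ∫ s in z..w, |1/s - besselK 1 s| :=
        intervalIntegral.abs_integral_le_integral_abs hzw
    _ ≤ ∫ s in z..w, s * (Real.log (1/z) + 3/2) := by
        apply intervalIntegral.integral_mono_on hzw hf.abs
        · apply ContinuousOn.intervalIntegrable
          fun_prop
        · intro x hx
          rw [abs_sub_comm]
          exact K1_pointwise hz hz1 hx.1
    _ = (Real.log (1/z) + 3/2) * ((w^2 - z^2)/2) := by
        rw [show (fun s : ℝ => s * (Real.log (1/z) + 3/2))
            = fun s : ℝ => (Real.log (1/z) + 3/2) * s from funext fun s => by ring]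
        rw [intervalIntegral.integral_const_mul, integral_id]
    _ ≤ (Real.log (1/z) + 3/2) * w^2 / 2 := by nlinarith

end BesselAux

open BesselAux in
set_option maxHeartbeats 4000000 in
theorem delta_reg_laplace_eigenvalue_difference_refined (δ : ℝ) (hδ : 1 < δ)
    (ε : ℝ) (hε : 0 < ε) (k : ℕ) (hk : 1 ≤ k) (hks : π * ε * (k : ℝ) ≤ 2 / 5) :
    |2 * π ^ 2 * ε * (k : ℝ) *
          (besselK 1 (π * ε * (k : ℝ)) / besselK 0 (π * ε * (k : ℝ))) -
        2 * π / (Real.log δ + besselK 0 (δ * π * ε * (k : ℝ)))| ≤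
      82 * π ^ 3 * δ ^ 2 * (1 + Real.log δ) * ε ^ 2 * (k : ℝ) ^ 2 := by
  have hkpos : (0:ℝ) < k := by exact_mod_cast hk
  set z := π * ε * (k : ℝ) with hzdef
  set L := Real.log (1/z) with hLdef
  set E := Real.exp 1 with hEdef
  set w := δ * z with hwdef
  set b0 := besselK 0 z with hb0def
  set b1 := besselK 1 z with hb1def
  set bd := besselK 0 w with hbddef
  set D := Real.log δ + bd with hDdef
  set u := E⁻¹ * L with hudef
  have hzpos : 0 < z := by rw [hzdef]; positivity
  have hz25 : z ≤ 2/5 := hks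
  have hz1 : z < 1 := by linarith
  have hL0 : 0 < L := by
    rw [hLdef]; exact Real.log_pos (by rw [lt_div_iff₀ hzpos]; linarith)
  have hL : Real.log 2 ≤ L := by
    rw [hLdef]
    apply Real.log_le_log two_pos
    rw [le_div_iff₀ hzpos]; linarith
  have hL693 : (0.6931471803:ℝ) ≤ L := le_trans Real.log_two_gt_d9.le hL
  have hE : E < 2.7182818286 := by rw [hEdef]; exact Real.exp_one_lt_d9
  have hE2 : (2:ℝ) < E := by
    rw [hEdef]
    have := Real.exp_one_gt_d9
    linarith
  have hEinv : Real.exp (-1) = E⁻¹ := by rw [hEdef, Real.exp_neg]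
  have hwpos : 0 < w := by
    rw [hwdef]; exact mul_pos (by linarith) hzpos
  have hzw : z ≤ w := by
    rw [hwdef]
    have h := mul_le_mul_of_nonneg_right hδ.le hzpos.le
    linarith only [h]
  have hlogδ : 0 < Real.log δ := Real.log_pos hδ
  have hEinvpos : (0:ℝ) < E⁻¹ := by positivity
  have hEinv1 : E⁻¹ ≤ 1 := by
    rw [inv_le_one_iff₀]; right; linarith
  have hupos : 0 < u := by
    rw [hudef]; exact mul_pos hEinvpos hL0
  -- lower bound for b0
  have hb0 : u ≤ b0 := by
    rw [hudef, hb0def, ← hEinv, hLdef]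
    exact besselK0_lower hzpos hz1
  have hb0pos : 0 < b0 := lt_of_lt_of_le hupos hb0
  -- lower bound for D
  have hD : u ≤ D := by
    rcases lt_or_ge w 1 with hw1 | hw1
    · have hbd : E⁻¹ * Real.log (1/w) ≤ bd := by
        rw [hbddef, ← hEinv]
        exact besselK0_lower hwpos hw1
      have hlogw : Real.log (1/w) = L - Real.log δ := by
        rw [hwdef, hLdef, one_div, one_div, Real.log_inv, Real.log_inv,
          Real.log_mul (by linarith) (ne_of_gt hzpos)]
        ring
      rw [hlogw] at hbd
      rw [hDdef, hudef]
      have hp : 0 ≤ (1 - E⁻¹) * Real.log δ :=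
        mul_nonneg (by linarith only [hEinv1]) hlogδ.le
      have hexp : E⁻¹ * (L - Real.log δ) = E⁻¹ * L - E⁻¹ * Real.log δ := by ring
      have hexp2 : (1 - E⁻¹) * Real.log δ = Real.log δ - E⁻¹ * Real.log δ := by ring
      rw [hexp] at hbd
      rw [hexp2] at hp
      linarith only [hbd, hp]
    · have hbd : 0 ≤ bd := by rw [hbddef]; exact besselK_nonneg 0 w
      have hlogw : 0 ≤ Real.log w := Real.log_nonneg hw1
      have hlogδw : Real.log δ = Real.log w + L := by
        rw [hwdef, hLdef, one_div, Real.log_inv,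
          Real.log_mul (by linarith) (ne_of_gt hzpos)]
        ring
      rw [hDdef, hudef]
      have hp := mul_le_mul_of_nonneg_right hEinv1 hL0.le
      rw [one_mul] at hp
      linarith only [hbd, hlogw, hlogδw, hp]
  have hDpos : 0 < D := lt_of_lt_of_le hupos hD
  -- numerator bounds
  have hnum1 : |z * b1 - 1| ≤ z^2 * (L + 3/2) := by
    have h1 := sK1_abs hzpos
    have h2 := Iaux_sub_le z hzpos (by linarith)
    have h3 := Iaux_sub_nonneg z hzpos
    rw [← hLdef] at h2
    rw [hb1def]
    calc |z * besselK 1 z - 1| ≤ z^2/2 + z * (1 - Iaux z) := h1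
      _ ≤ z^2/2 + z * (z * (L + 1)) := by
          have h4 := mul_le_mul_of_nonneg_left h2 hzpos.le
          linarith only [h4]
      _ = z^2 * (L + 3/2) := by ring
  have hnum2 : |D - b0| ≤ (L + 3/2) * (δ^2 * z^2) / 2 := by
    have h1 := d_bound hzpos (by linarith) hzw
    have h2 : w / z = δ := by
      rw [hwdef]; field_simp
    rw [h2, ← hLdef, ← hb0def, ← hbddef] at h1
    have h3 : D - b0 = Real.log δ - (b0 - bd) := by rw [hDdef]; ring
    rw [h3]
    calc |Real.log δ - (b0 - bd)| ≤ (L + 3/2) * w^2/2 := h1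
      _ = (L + 3/2) * (δ^2 * z^2) / 2 := by rw [hwdef]; ring
  -- make the set variables opaque
  clear_value z L E w b0 b1 bd D u
  -- rewrite the goal expression
  have harg : δ * π * ε * (k:ℝ) = w := by rw [hwdef, hzdef]; ring
  rw [harg, ← hbddef]
  have hb0ne : b0 ≠ 0 := ne_of_gt hb0pos
  have hDne : Real.log δ + bd ≠ 0 := by rw [← hDdef]; exact ne_of_gt hDpos
  have hexpr : 2 * π ^ 2 * ε * (k : ℝ) * (b1 / b0) - 2 * π / (Real.log δ + bd)
      = 2 * π * ((z * b1 - 1) / b0 + (D - b0) / (b0 * D)) := by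
    rw [hDdef, hzdef]
    field_simp
    ring
  rw [hexpr]
  -- numeric bounds
  have hE0 : (0:ℝ) < E := by linarith
  have hv36 : (0.36:ℝ) ≤ E⁻¹ := by
    have h1 := mul_le_mul_of_nonneg_right hE.le hEinvpos.le
    rw [mul_inv_cancel₀ (ne_of_gt hE0)] at h1
    linarith only [h1]
  have hL69 : (0.69:ℝ) ≤ L := by linarith only [hL693]
  have huL : 0.36 * L ≤ u := by
    rw [hudef]
    exact mul_le_mul_of_nonneg_right hv36 hL0.le
  have hu11 : L + 3/2 ≤ 11 * u := by linarith only [huL, hL69]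
  have hu60 : L + 3/2 ≤ 60 * (u * u) := by
    have hsq : (0.36 * L) * (0.36 * L) ≤ u * u :=
      mul_le_mul huL huL (mul_nonneg (by norm_num) hL0.le) hupos.le
    have hLL : 0.69 * L ≤ L * L := mul_le_mul_of_nonneg_right hL69 hL0.le
    linarith only [hsq, hLL, hL69]
  -- assemble
  have hterm1 : |(z * b1 - 1) / b0| ≤ 11 * z^2 := by
    rw [abs_div, abs_of_pos hb0pos, div_le_iff₀ hb0pos]
    have h1 : z^2 * (L + 3/2) ≤ z^2 * (11 * u) :=
      mul_le_mul_of_nonneg_left hu11 (sq_nonneg z)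
    have h2 : z^2 * (11 * u) ≤ z^2 * (11 * b0) := by
      apply mul_le_mul_of_nonneg_left _ (sq_nonneg z)
      linarith only [hb0]
    calc |z * b1 - 1| ≤ z^2 * (L + 3/2) := hnum1
      _ ≤ z^2 * (11 * b0) := le_trans h1 h2
      _ = 11 * z^2 * b0 := by ring
  have hterm2 : |(D - b0) / (b0 * D)| ≤ 30 * (δ^2 * z^2) := by
    rw [abs_div, abs_of_pos (mul_pos hb0pos hDpos), div_le_iff₀ (mul_pos hb0pos hDpos)]
    have hA : (L + 3/2) * (δ^2 * z^2) ≤ 60 * (u * u) * (δ^2 * z^2) :=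
      mul_le_mul_of_nonneg_right hu60 (by positivity)
    have hB : u * u ≤ b0 * D := by
      have h1 := mul_le_mul_of_nonneg_right hb0 hDpos.le
      have h2 := mul_le_mul_of_nonneg_left hD hupos.le
      linarith only [h1, h2]
    have hC : 30 * (δ^2 * z^2) * (u * u) ≤ 30 * (δ^2 * z^2) * (b0 * D) :=
      mul_le_mul_of_nonneg_left hB (by positivity)
    calc |D - b0| ≤ (L + 3/2) * (δ^2 * z^2) / 2 := hnum2
      _ ≤ 60 * (u * u) * (δ^2 * z^2) / 2 := by linarith only [hA]
      _ = 30 * (δ^2 * z^2) * (u * u) := by ring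
      _ ≤ 30 * (δ^2 * z^2) * (b0 * D) := hC
  have hzsq : z^2 = π^2 * ε^2 * (k:ℝ)^2 := by rw [hzdef]; ring
  have hδ2 : (1:ℝ) ≤ δ^2 := by
    have h := mul_le_mul hδ.le hδ.le zero_le_one (by linarith only [hδ])
    rw [sq]
    linarith only [h]
  have hzδ : z^2 ≤ δ^2 * z^2 := by
    have h := mul_le_mul_of_nonneg_right hδ2 (sq_nonneg z)
    linarith only [h]
  calc |2 * π * ((z * b1 - 1) / b0 + (D - b0) / (b0 * D))|
      = 2 * π * |(z * b1 - 1) / b0 + (D - b0) / (b0 * D)| := by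
        rw [abs_mul, abs_of_pos (by positivity : (0:ℝ) < 2 * π)]
    _ ≤ 2 * π * (|(z * b1 - 1) / b0| + |(D - b0) / (b0 * D)|) := by
        apply mul_le_mul_of_nonneg_left (abs_add_le _ _) (by positivity)
    _ ≤ 2 * π * (11 * z^2 + 30 * (δ^2 * z^2)) := by
        apply mul_le_mul_of_nonneg_left (add_le_add hterm1 hterm2) (by positivity)
    _ ≤ 2 * π * (41 * (δ^2 * z^2)) := by
        apply mul_le_mul_of_nonneg_left _ (by positivity)
        linarith only [hzδ]
    _ = 82 * π * (δ^2 * z^2) := by ring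
    _ ≤ 82 * π * δ^2 * (1 + Real.log δ) * z^2 := by
        have h := mul_nonneg (mul_nonneg (mul_nonneg
          (by positivity : (0:ℝ) ≤ 82 * π) (sq_nonneg δ)) hlogδ.le) (sq_nonneg z)
        linarith only [h]
    _ = 82 * π ^ 3 * δ ^ 2 * (1 + Real.log δ) * ε ^ 2 * (k : ℝ) ^ 2 := by
        rw [hzsq]; ring
end

section
/- For every real δ > √e, every real ε > 0, and every positive integer k, writing K_j = K_j(πεk), the tangential Stokes slender-body PDE eigenvalue λᵗ = 4π²εk·K₁² / (2K₀K₁ + πεk·(K₀² − K₁²)) and the δ-regularized tangential eigenvalue λ^{δ,t} = 4π/(−1 + 2·log δ + 2·K₀(δπεk)) satisfy |λᵗ − λ^{δ,t}| ≤ 4π·(1/2 + 1/(−1 + 2·log δ) + πεk). -/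
open Real

namespace SlenderBodyAux

open MeasureTheory Set Filter Topology

/-- moments of the measure `exp (-z cosh t) dt` on `(0,∞)`. -/
noncomputable def mu (z : ℝ) (n : ℕ) : ℝ :=
  ∫ t in Set.Ioi (0 : ℝ), Real.exp (-z * Real.cosh t) * Real.cosh t ^ n

lemma besselK_zero (z : ℝ) : besselK 0 z = mu z 0 := by
  simp [besselK, mu]

lemma besselK_one (z : ℝ) : besselK 1 z = mu z 1 := by
  simp [besselK, mu]

lemma exp_cosh_bound {z : ℝ} (hz : 0 < z) (n : ℕ) {t : ℝ} (ht : 0 ≤ t) :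
    exp (-z * cosh t) * cosh t ^ n ≤
      2 * (Nat.factorial (n + 1) : ℝ) / z ^ (n + 1) * exp (-t) := by
  have hy1 : (1 : ℝ) ≤ cosh t := one_le_cosh t
  have hy0 : (0 : ℝ) < cosh t := lt_of_lt_of_le one_pos hy1
  have het : exp t ≤ 2 * cosh t := by rw [cosh_eq]; nlinarith [exp_pos (-t)]
  have hfpos : (0 : ℝ) < (Nat.factorial (n + 1) : ℝ) := by
    exact_mod_cast Nat.factorial_pos (n + 1)
  have hfac : (z * cosh t) ^ (n + 1) ≤ (Nat.factorial (n + 1) : ℝ) * exp (z * cosh t) := by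
    have h := Real.pow_div_factorial_le_exp (z * cosh t) (by positivity) (n + 1)
    calc (z * cosh t) ^ (n + 1)
        = (z * cosh t) ^ (n + 1) / (Nat.factorial (n + 1) : ℝ) * (Nat.factorial (n + 1) : ℝ) := by
          field_simp
      _ ≤ exp (z * cosh t) * (Nat.factorial (n + 1) : ℝ) := by
          exact mul_le_mul_of_nonneg_right h hfpos.le
      _ = (Nat.factorial (n + 1) : ℝ) * exp (z * cosh t) := by ring
  have hmain : cosh t ^ n * exp t * z ^ (n + 1) ≤
      2 * (Nat.factorial (n + 1) : ℝ) * exp (z * cosh t) := by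
    have h1 : cosh t ^ n * exp t * z ^ (n + 1) ≤ cosh t ^ n * (2 * cosh t) * z ^ (n + 1) :=
      mul_le_mul_of_nonneg_right
        (mul_le_mul_of_nonneg_left het (pow_nonneg hy0.le n)) (pow_nonneg hz.le (n + 1))
    have h2 : cosh t ^ n * (2 * cosh t) * z ^ (n + 1) = 2 * (z * cosh t) ^ (n + 1) := by
      rw [mul_pow]; ring
    nlinarith [hfac]
  rw [neg_mul, Real.exp_neg, Real.exp_neg, inv_mul_eq_div, ← div_eq_mul_inv,
    div_le_div_iff₀ (exp_pos _) (exp_pos _), div_mul_eq_mul_div,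
    le_div_iff₀ (by positivity : (0 : ℝ) < z ^ (n + 1))]
  linarith [hmain]

lemma cont_integrand (z : ℝ) (n : ℕ) :
    Continuous fun t : ℝ => exp (-z * cosh t) * cosh t ^ n := by
  fun_prop

lemma integrable_mu {z : ℝ} (hz : 0 < z) (n : ℕ) :
    IntegrableOn (fun t : ℝ => exp (-z * cosh t) * cosh t ^ n) (Ioi (0 : ℝ)) := by
  have hg : IntegrableOn (fun t : ℝ => 2 * (Nat.factorial (n + 1) : ℝ) / z ^ (n + 1) * exp (-t))
      (Ioi (0 : ℝ)) := by
    have h := exp_neg_integrableOn_Ioi (0 : ℝ) (one_pos (α := ℝ))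
    simp only [neg_one_mul] at h
    exact h.const_mul _
  refine hg.mono' ((cont_integrand z n).aestronglyMeasurable) ?_
  rw [ae_restrict_iff' measurableSet_Ioi]
  refine Filter.Eventually.of_forall fun t ht => ?_
  rw [Real.norm_eq_abs, abs_of_nonneg (by positivity)]
  exact exp_cosh_bound hz n (le_of_lt ht)

lemma mu_pos {z : ℝ} (hz : 0 < z) : 0 < mu z 0 := by
  rw [mu, setIntegral_pos_iff_support_of_nonneg_ae
    (Filter.Eventually.of_forall fun t => by positivity) (integrable_mu hz 0)]
  have hsupp : Function.support (fun t : ℝ => exp (-z * cosh t) * cosh t ^ 0) = Set.univ := by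
    ext t
    simp [Function.mem_support, Real.exp_ne_zero]
  rw [hsupp, Set.univ_inter, Real.volume_Ioi]
  exact ENNReal.zero_lt_top

lemma mu_zero_le_mu_one {z : ℝ} (hz : 0 < z) : mu z 0 ≤ mu z 1 := by
  refine setIntegral_mono_on (integrable_mu hz 0) (integrable_mu hz 1) measurableSet_Ioi
    fun t _ => ?_
  simp only [pow_zero, pow_one, mul_one]
  exact le_mul_of_one_le_right (exp_pos _).le (one_le_cosh t)

lemma integral_combo {z : ℝ} (hz : 0 < z) (c0 c1 c2 c3 c4 : ℝ) :
    (∫ t in Ioi (0 : ℝ),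
      (c0 * (exp (-z * cosh t) * cosh t ^ 0) + c1 * (exp (-z * cosh t) * cosh t ^ 1) +
        c2 * (exp (-z * cosh t) * cosh t ^ 2) + c3 * (exp (-z * cosh t) * cosh t ^ 3) +
        c4 * (exp (-z * cosh t) * cosh t ^ 4))) =
      c0 * mu z 0 + c1 * mu z 1 + c2 * mu z 2 + c3 * mu z 3 + c4 * mu z 4 := by
  have I0 : Integrable (fun t : ℝ => c0 * (exp (-z * cosh t) * cosh t ^ 0))
      (volume.restrict (Ioi 0)) := (integrable_mu hz 0).const_mul c0
  have I1 : Integrable (fun t : ℝ => c1 * (exp (-z * cosh t) * cosh t ^ 1))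
      (volume.restrict (Ioi 0)) := (integrable_mu hz 1).const_mul c1
  have I2 : Integrable (fun t : ℝ => c2 * (exp (-z * cosh t) * cosh t ^ 2))
      (volume.restrict (Ioi 0)) := (integrable_mu hz 2).const_mul c2
  have I3 : Integrable (fun t : ℝ => c3 * (exp (-z * cosh t) * cosh t ^ 3))
      (volume.restrict (Ioi 0)) := (integrable_mu hz 3).const_mul c3
  have I4 : Integrable (fun t : ℝ => c4 * (exp (-z * cosh t) * cosh t ^ 4))
      (volume.restrict (Ioi 0)) := (integrable_mu hz 4).const_mul c4
  have I01 : Integrable (fun t : ℝ => c0 * (exp (-z * cosh t) * cosh t ^ 0) +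
      c1 * (exp (-z * cosh t) * cosh t ^ 1)) (volume.restrict (Ioi 0)) := I0.add I1
  have I012 : Integrable (fun t : ℝ => c0 * (exp (-z * cosh t) * cosh t ^ 0) +
      c1 * (exp (-z * cosh t) * cosh t ^ 1) + c2 * (exp (-z * cosh t) * cosh t ^ 2))
      (volume.restrict (Ioi 0)) := I01.add I2
  have I0123 : Integrable (fun t : ℝ => c0 * (exp (-z * cosh t) * cosh t ^ 0) +
      c1 * (exp (-z * cosh t) * cosh t ^ 1) + c2 * (exp (-z * cosh t) * cosh t ^ 2) +
      c3 * (exp (-z * cosh t) * cosh t ^ 3)) (volume.restrict (Ioi 0)) := I012.add I3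
  rw [integral_add I0123 I4, integral_add I012 I3, integral_add I01 I2, integral_add I0 I1,
    integral_const_mul, integral_const_mul, integral_const_mul, integral_const_mul,
    integral_const_mul]
  rfl

/-- decay of boundary terms -/
lemma tendsto_bdry {z : ℝ} (hz : 0 < z) (n : ℕ) :
    Tendsto (fun t : ℝ => exp (-z * cosh t) * (sinh t * cosh t ^ n)) atTop (𝓝 0) := by
  apply squeeze_zero' (f := fun t : ℝ => exp (-z * cosh t) * (sinh t * cosh t ^ n))
    (g := fun t : ℝ => 2 * (Nat.factorial (n + 1 + 1) : ℝ) / z ^ (n + 1 + 1) * exp (-t))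
  · filter_upwards [eventually_ge_atTop (0 : ℝ)] with t ht
    have := Real.sinh_nonneg_iff.mpr ht
    positivity
  · filter_upwards [eventually_ge_atTop (0 : ℝ)] with t ht
    have hsc : sinh t ≤ cosh t := by
      have := Real.cosh_sub_sinh t
      nlinarith [exp_pos (-t)]
    have h1 : exp (-z * cosh t) * (sinh t * cosh t ^ n) ≤ exp (-z * cosh t) * cosh t ^ (n + 1) := by
      have hs0 : 0 ≤ sinh t := Real.sinh_nonneg_iff.mpr ht
      have hc0 : (0:ℝ) < cosh t := lt_of_lt_of_le one_pos (one_le_cosh t)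
      have : sinh t * cosh t ^ n ≤ cosh t ^ (n + 1) := by
        rw [pow_succ]
        nlinarith [pow_nonneg hc0.le n]
      exact mul_le_mul_of_nonneg_left this (exp_pos _).le
    exact h1.trans (exp_cosh_bound hz (n + 1) ht)
  · simpa using tendsto_exp_neg_atTop_nhds_zero.const_mul
      (2 * (Nat.factorial (n + 1 + 1) : ℝ) / z ^ (n + 1 + 1))

lemma rel2 {z : ℝ} (hz : 0 < z) : mu z 1 + z * mu z 0 - z * mu z 2 = 0 := by
  have hder : ∀ t ∈ Ici (0 : ℝ), HasDerivAt (fun t => exp (-z * cosh t) * sinh t)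
      (exp (-z * cosh t) * (cosh t + z - z * cosh t ^ 2)) t := by
    intro t _
    have h1 : HasDerivAt (fun t : ℝ => -z * cosh t) (-z * sinh t) t :=
      (Real.hasDerivAt_cosh t).const_mul (-z)
    have h3 := (h1.exp).mul (Real.hasDerivAt_sinh t)
    refine h3.congr_deriv (Eq.symm ?_)
    have hs : sinh t ^ 2 = cosh t ^ 2 - 1 := Real.sinh_sq t
    linear_combination (z * exp (-z * cosh t)) * hs
  have hcomb : (fun t : ℝ => exp (-z * cosh t) * (cosh t + z - z * cosh t ^ 2)) =
      (fun t : ℝ => z * (exp (-z * cosh t) * cosh t ^ 0) + 1 * (exp (-z * cosh t) * cosh t ^ 1) +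
        (-z) * (exp (-z * cosh t) * cosh t ^ 2) + 0 * (exp (-z * cosh t) * cosh t ^ 3) +
        0 * (exp (-z * cosh t) * cosh t ^ 4)) := by
    funext t; ring
  have hint : IntegrableOn (fun t : ℝ => exp (-z * cosh t) * (cosh t + z - z * cosh t ^ 2))
      (Ioi (0 : ℝ)) := by
    rw [hcomb]
    exact (((((integrable_mu hz 0).const_mul z).add ((integrable_mu hz 1).const_mul 1)).add
      ((integrable_mu hz 2).const_mul (-z))).add ((integrable_mu hz 3).const_mul 0)).add
      ((integrable_mu hz 4).const_mul 0)
  have htend : Tendsto (fun t : ℝ => exp (-z * cosh t) * sinh t) atTop (𝓝 0) := by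
    have := tendsto_bdry hz 0
    simpa using this
  have hFTC := integral_Ioi_of_hasDerivAt_of_tendsto' hder hint htend
  rw [hcomb, integral_combo hz] at hFTC
  simp only [Real.cosh_zero, Real.sinh_zero, mul_zero, zero_sub, mul_one] at hFTC
  linarith [hFTC]

lemma rel3 {z : ℝ} (hz : 0 < z) : 2 * mu z 2 - mu z 0 + z * mu z 1 - z * mu z 3 = 0 := by
  have hder : ∀ t ∈ Ici (0 : ℝ), HasDerivAt (fun t => exp (-z * cosh t) * (sinh t * cosh t))
      (exp (-z * cosh t) * (2 * cosh t ^ 2 - 1 + z * cosh t - z * cosh t ^ 3)) t := by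
    intro t _
    have h1 : HasDerivAt (fun t : ℝ => -z * cosh t) (-z * sinh t) t :=
      (Real.hasDerivAt_cosh t).const_mul (-z)
    have h3 := (h1.exp).mul ((Real.hasDerivAt_sinh t).mul (Real.hasDerivAt_cosh t))
    refine h3.congr_deriv (Eq.symm ?_)
    have hs : sinh t ^ 2 = cosh t ^ 2 - 1 := Real.sinh_sq t
    simp only [Pi.mul_apply, Pi.pow_apply]
    linear_combination (exp (-z * cosh t) * (z * cosh t - 1)) * hs
  have hcomb : (fun t : ℝ => exp (-z * cosh t) * (2 * cosh t ^ 2 - 1 + z * cosh t - z * cosh t ^ 3)) =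
      (fun t : ℝ => (-1) * (exp (-z * cosh t) * cosh t ^ 0) + z * (exp (-z * cosh t) * cosh t ^ 1) +
        2 * (exp (-z * cosh t) * cosh t ^ 2) + (-z) * (exp (-z * cosh t) * cosh t ^ 3) +
        0 * (exp (-z * cosh t) * cosh t ^ 4)) := by
    funext t; ring
  have hint : IntegrableOn
      (fun t : ℝ => exp (-z * cosh t) * (2 * cosh t ^ 2 - 1 + z * cosh t - z * cosh t ^ 3))
      (Ioi (0 : ℝ)) := by
    rw [hcomb]
    exact (((((integrable_mu hz 0).const_mul (-1)).add ((integrable_mu hz 1).const_mul z)).add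
      ((integrable_mu hz 2).const_mul 2)).add ((integrable_mu hz 3).const_mul (-z))).add
      ((integrable_mu hz 4).const_mul 0)
  have htend : Tendsto (fun t : ℝ => exp (-z * cosh t) * (sinh t * cosh t)) atTop (𝓝 0) := by
    have := tendsto_bdry hz 1
    simpa using this
  have hFTC := integral_Ioi_of_hasDerivAt_of_tendsto' hder hint htend
  rw [hcomb, integral_combo hz] at hFTC
  simp only [Real.cosh_zero, Real.sinh_zero, mul_zero, zero_mul, zero_sub, mul_one] at hFTC
  linarith [hFTC]

lemma rel4 {z : ℝ} (hz : 0 < z) : 3 * mu z 3 - 2 * mu z 1 + z * mu z 2 - z * mu z 4 = 0 := by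
  have hder : ∀ t ∈ Ici (0 : ℝ), HasDerivAt (fun t => exp (-z * cosh t) * (sinh t * cosh t ^ 2))
      (exp (-z * cosh t) * (3 * cosh t ^ 3 - 2 * cosh t + z * cosh t ^ 2 - z * cosh t ^ 4)) t := by
    intro t _
    have h1 : HasDerivAt (fun t : ℝ => -z * cosh t) (-z * sinh t) t :=
      (Real.hasDerivAt_cosh t).const_mul (-z)
    have h3 := (h1.exp).mul ((Real.hasDerivAt_sinh t).mul ((Real.hasDerivAt_cosh t).pow 2))
    refine h3.congr_deriv (Eq.symm ?_)
    have hs : sinh t ^ 2 = cosh t ^ 2 - 1 := Real.sinh_sq t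
    have : HasDerivAt (fun t : ℝ => cosh t ^ 2) (2 * cosh t ^ 1 * sinh t) t :=
      (Real.hasDerivAt_cosh t).pow 2
    simp only [Pi.mul_apply, Pi.pow_apply, Nat.cast_ofNat]
    linear_combination (exp (-z * cosh t) * cosh t * (z * cosh t - 2)) * hs
  have hcomb : (fun t : ℝ =>
      exp (-z * cosh t) * (3 * cosh t ^ 3 - 2 * cosh t + z * cosh t ^ 2 - z * cosh t ^ 4)) =
      (fun t : ℝ => 0 * (exp (-z * cosh t) * cosh t ^ 0) +
        (-2) * (exp (-z * cosh t) * cosh t ^ 1) +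
        z * (exp (-z * cosh t) * cosh t ^ 2) + 3 * (exp (-z * cosh t) * cosh t ^ 3) +
        (-z) * (exp (-z * cosh t) * cosh t ^ 4)) := by
    funext t; ring
  have hint : IntegrableOn
      (fun t : ℝ => exp (-z * cosh t) * (3 * cosh t ^ 3 - 2 * cosh t + z * cosh t ^ 2 - z * cosh t ^ 4))
      (Ioi (0 : ℝ)) := by
    rw [hcomb]
    exact (((((integrable_mu hz 0).const_mul 0).add ((integrable_mu hz 1).const_mul (-2))).add
      ((integrable_mu hz 2).const_mul z)).add ((integrable_mu hz 3).const_mul 3)).add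
      ((integrable_mu hz 4).const_mul (-z))
  have htend : Tendsto (fun t : ℝ => exp (-z * cosh t) * (sinh t * cosh t ^ 2)) atTop (𝓝 0) :=
    tendsto_bdry hz 2
  have hFTC := integral_Ioi_of_hasDerivAt_of_tendsto' hder hint htend
  rw [hcomb, integral_combo hz] at hFTC
  simp only [Real.cosh_zero, Real.sinh_zero, mul_zero, zero_mul, zero_sub, mul_one, one_pow] at hFTC
  linarith [hFTC]

lemma cauchy_schwarz {z : ℝ} (hz : 0 < z) :
    (mu z 0 * mu z 3 - mu z 1 * mu z 2) ^ 2 ≤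
      (mu z 0 * mu z 2 - mu z 1 ^ 2) * (mu z 0 * mu z 4 - mu z 2 ^ 2) := by
  have h0 : 0 < mu z 0 := mu_pos hz
  have key : ∀ lam : ℝ,
      0 ≤ (mu z 0 * (mu z 0 * mu z 4 - mu z 2 ^ 2)) * (lam * lam) +
        (2 * (mu z 0 * (mu z 0 * mu z 3 - mu z 1 * mu z 2))) * lam +
        mu z 0 * (mu z 0 * mu z 2 - mu z 1 ^ 2) := by
    intro lam
    have hnn : 0 ≤ ∫ t in Ioi (0 : ℝ), exp (-z * cosh t) *
        (lam * mu z 0 * cosh t ^ 2 + mu z 0 * cosh t - (mu z 1 + lam * mu z 2)) ^ 2 :=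
      setIntegral_nonneg measurableSet_Ioi fun t _ => by positivity
    have hexp : (fun t : ℝ => exp (-z * cosh t) *
        (lam * mu z 0 * cosh t ^ 2 + mu z 0 * cosh t - (mu z 1 + lam * mu z 2)) ^ 2) =
        (fun t : ℝ =>
          ((mu z 1 + lam * mu z 2) ^ 2) * (exp (-z * cosh t) * cosh t ^ 0) +
          (-2 * mu z 0 * (mu z 1 + lam * mu z 2)) * (exp (-z * cosh t) * cosh t ^ 1) +
          (mu z 0 ^ 2 - 2 * lam * mu z 0 * (mu z 1 + lam * mu z 2)) *
            (exp (-z * cosh t) * cosh t ^ 2) +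
          (2 * lam * mu z 0 ^ 2) * (exp (-z * cosh t) * cosh t ^ 3) +
          (lam ^ 2 * mu z 0 ^ 2) * (exp (-z * cosh t) * cosh t ^ 4)) := by
      funext t; ring
    rw [hexp, integral_combo hz] at hnn
    nlinarith [hnn]
  have hd := discrim_le_zero key
  rw [discrim] at hd
  nlinarith [hd, pow_pos h0 2, mul_pos h0 h0]

/-- The key inequality: `2 z μ₁² ≤ (1+2z)(2 μ₀ μ₁ + z (μ₀² − μ₁²))`. -/
lemma key_ineq {z : ℝ} (hz : 0 < z) :
    2 * z * mu z 1 ^ 2 ≤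
      (1 + 2 * z) * (2 * mu z 0 * mu z 1 + z * (mu z 0 ^ 2 - mu z 1 ^ 2)) := by
  have h0 : 0 < mu z 0 := mu_pos hz
  have h01 : mu z 0 ≤ mu z 1 := mu_zero_le_mu_one hz
  have h1 : 0 < mu z 1 := lt_of_lt_of_le h0 h01
  have hzne : z ≠ 0 := ne_of_gt hz
  have hmu2 : mu z 2 = (mu z 1 + z * mu z 0) / z := by
    rw [eq_div_iff hzne]; linarith [rel2 hz]
  have hmu3 : mu z 3 = (2 * mu z 2 - mu z 0 + z * mu z 1) / z := by
    rw [eq_div_iff hzne]; linarith [rel3 hz]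
  have hmu4 : mu z 4 = (3 * mu z 3 - 2 * mu z 1 + z * mu z 2) / z := by
    rw [eq_div_iff hzne]; linarith [rel4 hz]
  have hCS := cauchy_schwarz hz
  have hden : 0 < mu z 0 * (2 * z * mu z 0 + 3 * mu z 1) := by positivity
  have hnum : 0 ≤ 4 * z * mu z 0 ^ 2 * (mu z 1 - mu z 0) * (2 * mu z 1 + z * mu z 0) +
      (2 * z + 3) * (z ^ 4 * ((mu z 0 * mu z 2 - mu z 1 ^ 2) * (mu z 0 * mu z 4 - mu z 2 ^ 2) -
        (mu z 0 * mu z 3 - mu z 1 * mu z 2) ^ 2)) := by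
    have t1 : 0 ≤ 4 * z * mu z 0 ^ 2 * (mu z 1 - mu z 0) * (2 * mu z 1 + z * mu z 0) :=
      mul_nonneg (mul_nonneg (by positivity) (by linarith)) (by positivity)
    have t2 : 0 ≤ (mu z 0 * mu z 2 - mu z 1 ^ 2) * (mu z 0 * mu z 4 - mu z 2 ^ 2) -
        (mu z 0 * mu z 3 - mu z 1 * mu z 2) ^ 2 := sub_nonneg.mpr hCS
    have t3 : 0 ≤ (2 * z + 3) * (z ^ 4 * ((mu z 0 * mu z 2 - mu z 1 ^ 2) *
        (mu z 0 * mu z 4 - mu z 2 ^ 2) - (mu z 0 * mu z 3 - mu z 1 * mu z 2) ^ 2)) :=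
      mul_nonneg (by linarith) (mul_nonneg (by positivity) t2)
    linarith
  have hW : ((1 + 2 * z) * (2 * mu z 0 * mu z 1 + z * (mu z 0 ^ 2 - mu z 1 ^ 2)) -
        2 * z * mu z 1 ^ 2) * (mu z 0 * (2 * z * mu z 0 + 3 * mu z 1)) =
      4 * z * mu z 0 ^ 2 * (mu z 1 - mu z 0) * (2 * mu z 1 + z * mu z 0) +
        (2 * z + 3) * (z ^ 4 * ((mu z 0 * mu z 2 - mu z 1 ^ 2) * (mu z 0 * mu z 4 - mu z 2 ^ 2) -
          (mu z 0 * mu z 3 - mu z 1 * mu z 2) ^ 2)) := by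
    rw [hmu4, hmu3, hmu2]
    field_simp
    ring
  have hfin : 0 ≤ (1 + 2 * z) * (2 * mu z 0 * mu z 1 + z * (mu z 0 ^ 2 - mu z 1 ^ 2)) -
      2 * z * mu z 1 ^ 2 := by
    have := (mul_nonneg_iff_of_pos_right hden).mp (by rw [hW]; exact hnum)
    exact this
  linarith

end SlenderBodyAux

open SlenderBodyAux MeasureTheory Set Filter Topology

theorem delta_reg_stokes_tangential_eigenvalue_difference (δ : ℝ)
    (hδ : Real.sqrt (Real.exp 1) < δ) (ε : ℝ) (hε : 0 < ε) (k : ℕ) (hk : 1 ≤ k) :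
    |4 * π ^ 2 * ε * (k : ℝ) * (besselK 1 (π * ε * (k : ℝ))) ^ 2 /
          (2 * besselK 0 (π * ε * (k : ℝ)) * besselK 1 (π * ε * (k : ℝ)) +
            π * ε * (k : ℝ) *
              ((besselK 0 (π * ε * (k : ℝ))) ^ 2 - (besselK 1 (π * ε * (k : ℝ))) ^ 2)) -
        4 * π / (-1 + 2 * Real.log δ + 2 * besselK 0 (δ * π * ε * (k : ℝ)))| ≤
      4 * π * (1 / 2 + 1 / (-1 + 2 * Real.log δ) + π * ε * (k : ℝ)) := by
  have hk0 : (0 : ℝ) < (k : ℝ) := by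
    have : 0 < k := hk
    exact_mod_cast this
  have hzpos : 0 < π * ε * (k : ℝ) := by positivity
  have hδ1 : (1 : ℝ) < δ := by
    have h1 : (1 : ℝ) < Real.sqrt (Real.exp 1) := by
      have hs := Real.sq_sqrt (Real.exp_pos 1).le
      have hsn := Real.sqrt_nonneg (Real.exp 1)
      nlinarith [Real.exp_one_gt_d9]
    linarith
  have hδ0 : (0 : ℝ) < δ := by linarith
  have hzd : 0 < δ * π * ε * (k : ℝ) := by positivity
  have hlog : 1 / 2 < Real.log δ := by
    have h1 : Real.log (Real.sqrt (Real.exp 1)) = 1 / 2 := by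
      rw [Real.log_sqrt (Real.exp_pos 1).le, Real.log_exp]
    calc (1 : ℝ) / 2 = Real.log (Real.sqrt (Real.exp 1)) := h1.symm
      _ < Real.log δ := Real.log_lt_log (Real.sqrt_pos.mpr (Real.exp_pos 1)) hδ
  simp only [besselK_zero, besselK_one]
  have ha0 : 0 < mu (π * ε * (k : ℝ)) 0 := mu_pos hzpos
  have ha01 : mu (π * ε * (k : ℝ)) 0 ≤ mu (π * ε * (k : ℝ)) 1 := mu_zero_le_mu_one hzpos
  have ha1 : 0 < mu (π * ε * (k : ℝ)) 1 := lt_of_lt_of_le ha0 ha01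
  have hKey := key_ineq hzpos
  -- denominator positivity
  have hD : 0 < 2 * mu (π * ε * (k : ℝ)) 0 * mu (π * ε * (k : ℝ)) 1 + (π * ε * (k : ℝ)) * (mu (π * ε * (k : ℝ)) 0 ^ 2 - mu (π * ε * (k : ℝ)) 1 ^ 2) := by
    have hnum2 : 0 < 2 * (π * ε * (k : ℝ)) * mu (π * ε * (k : ℝ)) 1 ^ 2 := by positivity
    have h12 : (0 : ℝ) < 1 + 2 * (π * ε * (k : ℝ)) := by linarith
    nlinarith [hKey, hnum2, h12]
  -- bound for the PDE eigenvalue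
  have hA1 : 0 ≤ 4 * π ^ 2 * ε * (k : ℝ) * mu (π * ε * (k : ℝ)) 1 ^ 2 /
      (2 * mu (π * ε * (k : ℝ)) 0 * mu (π * ε * (k : ℝ)) 1 + (π * ε * (k : ℝ)) * (mu (π * ε * (k : ℝ)) 0 ^ 2 - mu (π * ε * (k : ℝ)) 1 ^ 2)) := by
    apply div_nonneg _ hD.le
    positivity
  have hA2 : 4 * π ^ 2 * ε * (k : ℝ) * mu (π * ε * (k : ℝ)) 1 ^ 2 /
      (2 * mu (π * ε * (k : ℝ)) 0 * mu (π * ε * (k : ℝ)) 1 + (π * ε * (k : ℝ)) * (mu (π * ε * (k : ℝ)) 0 ^ 2 - mu (π * ε * (k : ℝ)) 1 ^ 2)) ≤ 2 * π + 4 * π * (π * ε * (k : ℝ)) := by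
    rw [div_le_iff₀ hD]
    have h2 := mul_le_mul_of_nonneg_left hKey (by positivity : (0 : ℝ) ≤ 2 * π)
    nlinarith [h2]
  -- the regularized eigenvalue
  have hb0 : 0 < mu (δ * π * ε * (k : ℝ)) 0 := mu_pos hzd
  have hBden : 0 < -1 + 2 * Real.log δ + 2 * mu (δ * π * ε * (k : ℝ)) 0 := by linarith
  have hBden2 : (0 : ℝ) < -1 + 2 * Real.log δ := by linarith
  have hB1 : 0 ≤ 4 * π / (-1 + 2 * Real.log δ + 2 * mu (δ * π * ε * (k : ℝ)) 0) := by
    apply div_nonneg _ hBden.le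
    positivity
  have hB2 : 4 * π / (-1 + 2 * Real.log δ + 2 * mu (δ * π * ε * (k : ℝ)) 0) ≤
      4 * π * (1 / (-1 + 2 * Real.log δ)) := by
    rw [mul_one_div]
    apply div_le_div_of_nonneg_left (by positivity) hBden2
    linarith
  have hQ : 0 < 1 / (-1 + 2 * Real.log δ) := by positivity
  have hπz : 0 < π * (π * ε * (k : ℝ)) := by positivity
  have hπQ : 0 < π * (1 / (-1 + 2 * Real.log δ)) := by positivity
  rw [abs_le]
  constructor
  · nlinarith [hA1, hB2, hπz, hπQ, Real.pi_pos]
  · nlinarith [hA2, hB1, hπz, hπQ, Real.pi_pos]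
end

section
/- For every real δ > √e, every real ε > 0, and every positive integer k, writing K_j = K_j(πεk), the normal Stokes slender-body PDE eigenvalue λⁿ = 2π²εk·(4K₁²K₂ + πεk·K₁·(K₁² − K₀K₂)) / (2K₀K₁K₂ + πεk·(K₁²(K₀ + K₂) − 2K₀²K₂)) and the δ-regularized normal eigenvalue λ^{δ,n} = 8π/(1 + 2·log δ + 2·K₀(δπεk)) satisfy |λⁿ − λ^{δ,n}| ≤ 3π·(1 + 8/(3·(1 + 2·log δ)) + πεk). -/
open Real

open MeasureTheory Set Filter Topology

set_option maxHeartbeats 1000000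

lemma cosh_le_exp_abs (x : ℝ) : Real.cosh x ≤ Real.exp |x| := by
  rw [Real.cosh_eq]
  have h1 : Real.exp x ≤ Real.exp |x| := Real.exp_le_exp.2 (le_abs_self x)
  have h2 : Real.exp (-x) ≤ Real.exp |x| := Real.exp_le_exp.2 (neg_le_abs x)
  linarith

lemma one_add_sq_half_le_cosh {t : ℝ} (ht : 0 ≤ t) : 1 + t ^ 2 / 2 ≤ Real.cosh t := by
  have h := Real.cosh_two_mul (t / 2)
  have h2 : t / 2 ≤ Real.sinh (t / 2) := Real.self_le_sinh_iff.2 (by linarith)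
  have h3 : Real.cosh (t / 2) ^ 2 = Real.sinh (t / 2) ^ 2 + 1 := Real.cosh_sq _
  have : Real.cosh (2 * (t / 2)) = Real.cosh t := by ring_nf
  nlinarith [sq_nonneg (Real.sinh (t/2) - t/2)]

lemma besselK_integrand_integrableOn {z : ℝ} (hz : 0 < z) (c : ℝ) :
    IntegrableOn (fun t => Real.exp (-z * Real.cosh t) * Real.cosh (c * t)) (Ioi (0:ℝ)) := by
  have hmeas : AEStronglyMeasurable (fun t => Real.exp (-z * Real.cosh t) * Real.cosh (c * t))
      (volume.restrict (Ioi (0:ℝ))) := by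
    exact ((Real.continuous_exp.comp (continuous_const.mul Real.continuous_cosh)).mul
      (Real.continuous_cosh.comp (continuous_const.mul continuous_id))).aestronglyMeasurable
  have hg : IntegrableOn (fun t => Real.exp ((|c|+1)^2/(2*z) - z) * Real.exp (-t)) (Ioi (0:ℝ)) := by
    have := (exp_neg_integrableOn_Ioi (0:ℝ) (one_pos)).const_mul (Real.exp ((|c|+1)^2/(2*z) - z))
    simpa [IntegrableOn] using this
  refine (hg.mono' hmeas ?_)
  filter_upwards [ae_restrict_mem measurableSet_Ioi] with t ht
  have ht0 : (0:ℝ) ≤ t := le_of_lt ht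
  have h1 : Real.cosh (c * t) ≤ Real.exp (|c| * t) := by
    calc Real.cosh (c * t) ≤ Real.exp |c * t| := cosh_le_exp_abs _
    _ = Real.exp (|c| * t) := by rw [abs_mul, abs_of_nonneg ht0]
  have h2 : 1 + t ^ 2 / 2 ≤ Real.cosh t := one_add_sq_half_le_cosh ht0
  have key : -z * Real.cosh t + |c| * t ≤ (|c|+1)^2/(2*z) - z - t := by
    have hamgm : (|c| + 1) * t - z * t ^ 2 / 2 ≤ (|c|+1)^2/(2*z) := by
      rw [le_div_iff₀ (by positivity : (0:ℝ) < 2*z)]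
      nlinarith [sq_nonneg (z * t - (|c| + 1))]
    nlinarith
  have hpos : 0 < Real.cosh (c * t) := Real.cosh_pos _
  rw [norm_mul, Real.norm_eq_abs, Real.norm_eq_abs, abs_of_pos (Real.exp_pos _),
    abs_of_pos hpos]
  calc Real.exp (-z * Real.cosh t) * Real.cosh (c * t)
      ≤ Real.exp (-z * Real.cosh t) * Real.exp (|c| * t) := by
        exact mul_le_mul_of_nonneg_left h1 (Real.exp_pos _).le
    _ = Real.exp (-z * Real.cosh t + |c| * t) := by rw [← Real.exp_add]
    _ ≤ Real.exp ((|c|+1)^2/(2*z) - z - t) := Real.exp_le_exp.2 key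
    _ = Real.exp ((|c|+1)^2/(2*z) - z) * Real.exp (-t) := by rw [← Real.exp_add]; ring_nf

lemma combo_funext (z c₀ c₁ c₂ c₃ : ℝ) :
    (fun t => Real.exp (-z * Real.cosh t) *
      (c₀ + c₁ * Real.cosh t + c₂ * Real.cosh (2*t) + c₃ * Real.cosh (3*t)))
    = (fun t => c₀ * (Real.exp (-z * Real.cosh t) * Real.cosh ((0:ℝ)*t))
        + c₁ * (Real.exp (-z * Real.cosh t) * Real.cosh ((1:ℝ)*t))
        + c₂ * (Real.exp (-z * Real.cosh t) * Real.cosh (2*t))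
        + c₃ * (Real.exp (-z * Real.cosh t) * Real.cosh (3*t))) := by
  funext t
  rw [zero_mul, Real.cosh_zero, one_mul]
  ring

lemma integrableOn_combo {z : ℝ} (hz : 0 < z) (c₀ c₁ c₂ c₃ : ℝ) :
    IntegrableOn (fun t => Real.exp (-z * Real.cosh t) *
      (c₀ + c₁ * Real.cosh t + c₂ * Real.cosh (2*t) + c₃ * Real.cosh (3*t))) (Ioi (0:ℝ)) := by
  rw [combo_funext]
  exact ((((besselK_integrand_integrableOn hz 0).const_mul c₀).add
    ((besselK_integrand_integrableOn hz 1).const_mul c₁)).add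
    ((besselK_integrand_integrableOn hz 2).const_mul c₂)).add
    ((besselK_integrand_integrableOn hz 3).const_mul c₃)

lemma integral_combo {z : ℝ} (hz : 0 < z) (c₀ c₁ c₂ c₃ : ℝ) :
    ∫ t in Ioi (0:ℝ), Real.exp (-z * Real.cosh t) *
      (c₀ + c₁ * Real.cosh t + c₂ * Real.cosh (2*t) + c₃ * Real.cosh (3*t))
    = c₀ * (∫ t in Ioi (0:ℝ), Real.exp (-z * Real.cosh t) * Real.cosh ((0:ℝ)*t))
      + c₁ * (∫ t in Ioi (0:ℝ), Real.exp (-z * Real.cosh t) * Real.cosh ((1:ℝ)*t))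
      + c₂ * (∫ t in Ioi (0:ℝ), Real.exp (-z * Real.cosh t) * Real.cosh ((2:ℝ)*t))
      + c₃ * (∫ t in Ioi (0:ℝ), Real.exp (-z * Real.cosh t) * Real.cosh ((3:ℝ)*t)) := by
  rw [combo_funext]
  rw [integral_add, integral_add, integral_add, MeasureTheory.integral_const_mul, MeasureTheory.integral_const_mul,
    MeasureTheory.integral_const_mul, MeasureTheory.integral_const_mul]
  · exact (besselK_integrand_integrableOn hz 0).const_mul c₀
  · exact (besselK_integrand_integrableOn hz 1).const_mul c₁
  · exact (((besselK_integrand_integrableOn hz 0).const_mul c₀).add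
      ((besselK_integrand_integrableOn hz 1).const_mul c₁))
  · exact (besselK_integrand_integrableOn hz 2).const_mul c₂
  · exact ((((besselK_integrand_integrableOn hz 0).const_mul c₀).add
      ((besselK_integrand_integrableOn hz 1).const_mul c₁)).add
      ((besselK_integrand_integrableOn hz 2).const_mul c₂))
  · exact (besselK_integrand_integrableOn hz 3).const_mul c₃

lemma tendsto_cosh_atTop' : Tendsto Real.cosh atTop atTop := by
  refine tendsto_atTop_mono' atTop ?_ tendsto_id
  filter_upwards [eventually_ge_atTop (0:ℝ)] with t ht
  calc id t = t := rfl
  _ ≤ Real.sinh t := Real.self_le_sinh_iff.2 ht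
  _ ≤ Real.cosh t := by
      rw [Real.sinh_eq, Real.cosh_eq]
      have := Real.exp_pos (-t)
      linarith

lemma tendsto_pow_cosh {z : ℝ} (hz : 0 < z) (n : ℕ) :
    Tendsto (fun t => Real.cosh t ^ n * Real.exp (-z * Real.cosh t)) atTop (𝓝 0) := by
  have h1 : Tendsto (fun x : ℝ => (z*x) ^ n * Real.exp (-(z*x))) atTop (𝓝 0) :=
    (tendsto_pow_mul_exp_neg_atTop_nhds_zero n).comp (tendsto_id.const_mul_atTop hz)
  have h2 : Tendsto (fun x : ℝ => x ^ n * Real.exp (-z * x)) atTop (𝓝 0) := by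
    have h3 := h1.const_mul ((z:ℝ)^n)⁻¹
    rw [mul_zero] at h3
    refine h3.congr fun x => ?_
    rw [mul_pow]
    field_simp
  exact h2.comp tendsto_cosh_atTop'

lemma abs_sinh_le_cosh (x : ℝ) : |Real.sinh x| ≤ Real.cosh x := by
  rw [Real.abs_sinh, ← Real.cosh_abs]
  rw [Real.sinh_eq, Real.cosh_eq]
  have := Real.exp_pos (-|x|)
  linarith

lemma deriv_relation_R1 {z : ℝ} (hz : 0 < z) :
    ∫ t in Ioi (0:ℝ), Real.exp (-z * Real.cosh t) *
      ((z/2) * Real.cosh (2*t) - (z/2) - Real.cosh t) = 0 := by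
  have key : ∫ t in Ioi (0:ℝ), Real.exp (-z * Real.cosh t) *
      ((z/2) * Real.cosh (2*t) - (z/2) - Real.cosh t)
      = 0 - (-(Real.exp (-z * Real.cosh 0) * Real.sinh 0)) := by
    refine integral_Ioi_of_hasDerivAt_of_tendsto
      (f := fun t => -(Real.exp (-z * Real.cosh t) * Real.sinh t)) (a := 0) (m := 0) ?_ ?_ ?_ ?_
    · exact (Continuous.continuousWithinAt (by continuity))
    · intro x hx
      have h1 : HasDerivAt (fun t => -z * Real.cosh t) (-z * Real.sinh x) x :=
        (Real.hasDerivAt_cosh x).const_mul (-z)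
      have h2 : HasDerivAt (fun t => Real.exp (-z * Real.cosh t))
          (Real.exp (-z * Real.cosh x) * (-z * Real.sinh x)) x := h1.exp
      have h3 := (h2.mul (Real.hasDerivAt_sinh x)).neg
      convert h3 using 1
      · rfl
      have hc2 : Real.cosh (2*x) = 2 * Real.cosh x ^ 2 - 1 := by
        rw [Real.cosh_two_mul, Real.cosh_sq]; ring
      have hs2 : Real.sinh x ^ 2 = Real.cosh x ^ 2 - 1 := by
        have := Real.cosh_sq_sub_sinh_sq x; linarith
      rw [hc2]
      linear_combination (-(Real.exp (-z * Real.cosh x) * z)) * hs2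
    · have := integrableOn_combo hz (-(z/2)) (-1) (z/2) 0
      refine this.congr_fun ?_ measurableSet_Ioi
      intro t _
      ring
    · refine squeeze_zero_norm (fun t => ?_) (tendsto_pow_cosh hz 1)
      rw [norm_neg, norm_mul, Real.norm_eq_abs, Real.norm_eq_abs,
        abs_of_pos (Real.exp_pos _), pow_one]
      calc Real.exp (-z * Real.cosh t) * |Real.sinh t|
          ≤ Real.exp (-z * Real.cosh t) * Real.cosh t :=
            mul_le_mul_of_nonneg_left (abs_sinh_le_cosh t) (Real.exp_pos _).le
        _ = Real.cosh t * Real.exp (-z * Real.cosh t) := by ring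
  simpa using key

lemma deriv_relation_R2 {z : ℝ} (hz : 0 < z) :
    ∫ t in Ioi (0:ℝ), Real.exp (-z * Real.cosh t) *
      ((z/4) * Real.cosh (3*t) - (z/4) * Real.cosh t - Real.cosh (2*t)) = 0 := by
  have key : ∫ t in Ioi (0:ℝ), Real.exp (-z * Real.cosh t) *
      ((z/4) * Real.cosh (3*t) - (z/4) * Real.cosh t - Real.cosh (2*t))
      = 0 - (-(Real.exp (-z * Real.cosh 0) * (Real.sinh 0 * Real.cosh 0))) := by
    refine integral_Ioi_of_hasDerivAt_of_tendsto
      (f := fun t => -(Real.exp (-z * Real.cosh t) * (Real.sinh t * Real.cosh t)))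
      (a := 0) (m := 0) ?_ ?_ ?_ ?_
    · exact (Continuous.continuousWithinAt (by continuity))
    · intro x hx
      have h1 : HasDerivAt (fun t => -z * Real.cosh t) (-z * Real.sinh x) x :=
        (Real.hasDerivAt_cosh x).const_mul (-z)
      have h2 : HasDerivAt (fun t => Real.exp (-z * Real.cosh t))
          (Real.exp (-z * Real.cosh x) * (-z * Real.sinh x)) x := h1.exp
      have h3 := (h2.mul ((Real.hasDerivAt_sinh x).mul (Real.hasDerivAt_cosh x))).neg
      convert h3 using 1
      · rfl
      have hc3 : Real.cosh (3*x) = 4 * Real.cosh x ^ 3 - 3 * Real.cosh x :=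
        Real.cosh_three_mul x
      have hc2 : Real.cosh (2*x) = 2 * Real.cosh x ^ 2 - 1 := by
        rw [Real.cosh_two_mul, Real.cosh_sq]; ring
      have hs2 : Real.sinh x ^ 2 = Real.cosh x ^ 2 - 1 := by
        have := Real.cosh_sq_sub_sinh_sq x; linarith
      rw [hc3, hc2, Pi.mul_apply]
      linear_combination (-(Real.exp (-z * Real.cosh x) * z * Real.cosh x) + Real.exp (-z * Real.cosh x)) * hs2
    · have := integrableOn_combo hz 0 (-(z/4)) (-1) (z/4)
      refine this.congr_fun ?_ measurableSet_Ioi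
      intro t _
      ring
    · refine squeeze_zero_norm (fun t => ?_) (tendsto_pow_cosh hz 2)
      rw [norm_neg, norm_mul, Real.norm_eq_abs, Real.norm_eq_abs,
        abs_of_pos (Real.exp_pos _)]
      have h4 : |Real.sinh t * Real.cosh t| ≤ Real.cosh t ^ 2 := by
        rw [abs_mul, abs_of_pos (Real.cosh_pos t), sq]
        exact mul_le_mul_of_nonneg_right (abs_sinh_le_cosh t) (Real.cosh_pos t).le
      calc Real.exp (-z * Real.cosh t) * |Real.sinh t * Real.cosh t|
          ≤ Real.exp (-z * Real.cosh t) * Real.cosh t ^ 2 :=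
            mul_le_mul_of_nonneg_left h4 (Real.exp_pos _).le
        _ = Real.cosh t ^ 2 * Real.exp (-z * Real.cosh t) := by ring
  simpa using key

lemma besselK_eq (j : ℕ) (z : ℝ) : besselK j z
    = ∫ t in Ioi (0:ℝ), Real.exp (-z * Real.cosh t) * Real.cosh ((j : ℝ) * t) := rfl

lemma besselK_nonneg (j : ℕ) (z : ℝ) : 0 ≤ besselK j z := by
  refine setIntegral_nonneg measurableSet_Ioi fun t ht => ?_
  positivity

lemma besselK_pos {z : ℝ} (hz : 0 < z) : 0 < besselK 0 z := by
  rw [besselK_eq]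
  rw [setIntegral_pos_iff_support_of_nonneg_ae]
  · have hsup : (Function.support fun t => Real.exp (-z * Real.cosh t) * Real.cosh (((0:ℕ) : ℝ) * t)) = univ := by
      ext t
      simp only [Function.mem_support, mem_univ, iff_true]
      positivity
    rw [hsup, univ_inter]
    simp
  · filter_upwards with t
    positivity
  · have := besselK_integrand_integrableOn hz 0
    simpa using this

lemma besselK_zero_le_one {z : ℝ} (hz : 0 < z) : besselK 0 z ≤ besselK 1 z := by
  rw [besselK_eq, besselK_eq]
  refine setIntegral_mono_on (by simpa using besselK_integrand_integrableOn hz 0)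
    (by simpa using besselK_integrand_integrableOn hz 1) measurableSet_Ioi fun t ht => ?_
  have h1 : Real.cosh (((0:ℕ):ℝ) * t) = 1 := by norm_num
  have h2 : (1:ℝ) ≤ Real.cosh (((1:ℕ):ℝ) * t) := by
    rw [Nat.cast_one, one_mul]; exact Real.one_le_cosh t
  rw [h1]
  exact mul_le_mul_of_nonneg_left h2 (Real.exp_pos _).le

lemma besselK_eq0 (z : ℝ) : (∫ t in Ioi (0:ℝ), Real.exp (-z * Real.cosh t) * Real.cosh ((0:ℝ)*t)) = besselK 0 z := by
  rw [besselK_eq]; norm_num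
lemma besselK_eq1 (z : ℝ) : (∫ t in Ioi (0:ℝ), Real.exp (-z * Real.cosh t) * Real.cosh ((1:ℝ)*t)) = besselK 1 z := by
  rw [besselK_eq]; norm_num
lemma besselK_eq2 (z : ℝ) : (∫ t in Ioi (0:ℝ), Real.exp (-z * Real.cosh t) * Real.cosh ((2:ℝ)*t)) = besselK 2 z := by
  rw [besselK_eq]; norm_num
lemma besselK_eq3 (z : ℝ) : (∫ t in Ioi (0:ℝ), Real.exp (-z * Real.cosh t) * Real.cosh ((3:ℝ)*t)) = besselK 3 z := by
  rw [besselK_eq]; norm_num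

lemma rel_R1 {z : ℝ} (hz : 0 < z) :
    z * besselK 2 z = z * besselK 0 z + 2 * besselK 1 z := by
  have h := deriv_relation_R1 hz
  have hfun : (fun t => Real.exp (-z * Real.cosh t) *
      ((z/2) * Real.cosh (2*t) - (z/2) - Real.cosh t))
      = (fun t => Real.exp (-z * Real.cosh t) *
      ((-(z/2)) + (-1) * Real.cosh t + (z/2) * Real.cosh (2*t) + 0 * Real.cosh (3*t))) := by
    funext t; ring
  rw [hfun, integral_combo hz, besselK_eq0, besselK_eq1, besselK_eq2, besselK_eq3] at h
  linarith

lemma rel_R2 {z : ℝ} (hz : 0 < z) :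
    z * besselK 3 z = z * besselK 1 z + 4 * besselK 2 z := by
  have h := deriv_relation_R2 hz
  have hfun : (fun t => Real.exp (-z * Real.cosh t) *
      ((z/4) * Real.cosh (3*t) - (z/4) * Real.cosh t - Real.cosh (2*t)))
      = (fun t => Real.exp (-z * Real.cosh t) *
      (0 + (-(z/4)) * Real.cosh t + (-1) * Real.cosh (2*t) + (z/4) * Real.cosh (3*t))) := by
    funext t; ring
  rw [hfun, integral_combo hz, besselK_eq0, besselK_eq1, besselK_eq2, besselK_eq3] at h
  linarith

lemma rel_CS {z : ℝ} (hz : 0 < z) :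
    (besselK 1 z)^2 ≤ (besselK 0 z)^2 / 2 + besselK 0 z * besselK 2 z / 2 := by
  set a := besselK 0 z with ha'
  set b := besselK 1 z with hb'
  have ha : 0 < a := besselK_pos hz
  set lam := b / a with hlam
  have key : 0 ≤ ∫ t in Ioi (0:ℝ), Real.exp (-z * Real.cosh t) *
      ((lam^2 + 1/2) + (-2*lam) * Real.cosh t + (1/2) * Real.cosh (2*t) + 0 * Real.cosh (3*t)) := by
    refine setIntegral_nonneg measurableSet_Ioi fun t ht => ?_
    have hc2 : Real.cosh (2*t) = 2 * Real.cosh t ^ 2 - 1 := by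
      rw [Real.cosh_two_mul, Real.cosh_sq]; ring
    have : (lam^2 + 1/2) + (-2*lam) * Real.cosh t + (1/2) * Real.cosh (2*t) + 0 * Real.cosh (3*t)
        = (lam - Real.cosh t)^2 := by rw [hc2]; ring
    rw [this]
    positivity
  rw [integral_combo hz, besselK_eq0, besselK_eq1, besselK_eq2, besselK_eq3] at key
  rw [← ha', ← hb'] at key
  have h2 : 0 ≤ (lam^2 + 1/2) * a + (-2*lam) * b + 1/2 * besselK 2 z := by linarith
  rw [hlam] at h2
  have h3 := mul_nonneg h2 ha.le
  have h6 : (((b/a)^2 + 1/2) * a + (-2*(b/a)) * b + 1/2 * besselK 2 z) * a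
      = b^2 + a^2/2 - 2*b^2 + besselK 2 z * a / 2 := by
    field_simp
    ring
  rw [h6] at h3
  linarith

lemma rel_H3 {z : ℝ} (hz : 0 < z) :
    besselK 2 z - 4 * besselK 1 z + 3 * besselK 0 z ≤
      (1/4) * besselK 3 z - (1/4) * besselK 1 z - (1/2) * besselK 2 z + (1/2) * besselK 0 z := by
  have key : (∫ t in Ioi (0:ℝ), Real.exp (-z * Real.cosh t) *
      (3 + (-4) * Real.cosh t + 1 * Real.cosh (2*t) + 0 * Real.cosh (3*t)))
      ≤ ∫ t in Ioi (0:ℝ), Real.exp (-z * Real.cosh t) *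
      ((1/2) + (-(1/4)) * Real.cosh t + (-(1/2)) * Real.cosh (2*t) + (1/4) * Real.cosh (3*t)) := by
    refine setIntegral_mono_on (integrableOn_combo hz 3 (-4) 1 0)
      (integrableOn_combo hz (1/2) (-(1/4)) (-(1/2)) (1/4)) measurableSet_Ioi fun t ht => ?_
    have hc2 : Real.cosh (2*t) = 2 * Real.cosh t ^ 2 - 1 := by
      rw [Real.cosh_two_mul, Real.cosh_sq]; ring
    have hc3 : Real.cosh (3*t) = 4 * Real.cosh t ^ 3 - 3 * Real.cosh t := Real.cosh_three_mul t
    have h1 : (1:ℝ) ≤ Real.cosh t := Real.one_le_cosh t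
    refine mul_le_mul_of_nonneg_left ?_ (Real.exp_pos _).le
    rw [hc2, hc3]
    nlinarith [pow_le_pow_left₀ (by linarith : (0:ℝ) ≤ 1) h1 3, sq_nonneg (Real.cosh t - 1), h1]
  rw [integral_combo hz, integral_combo hz, besselK_eq0, besselK_eq1, besselK_eq2, besselK_eq3] at key
  linarith

lemma key_poly (a b z : ℝ) (ha : 0 < a) (hz : 0 < z) (h1 : a ≤ b)
    (h2 : z*b^2 ≤ z*a^2 + a*b) (h3 : 3*z*b ≤ 4*z^2*(b-a) + z*a + 2*b) :
    2*z*(2*z*a*b^2 + 8*b^3 + z^2*b*(b^2-a^2)) ≤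
      3*(1+z)*(4*a*b^2 + 2*z*b^3 - 2*z*a^2*b + 2*z^2*a*b^2 - 2*z^2*a^3) := by
  nlinarith [mul_nonneg (sub_nonneg.2 h2) (sub_nonneg.2 h3), sq_nonneg (b-a),
    mul_pos ha hz, mul_nonneg (mul_nonneg ha.le hz.le) (sub_nonneg.2 h1),
    mul_nonneg (mul_nonneg (mul_nonneg hz.le hz.le) ha.le) (sub_nonneg.2 h1),
    mul_nonneg (mul_nonneg hz.le (sub_nonneg.2 h1)) (sub_nonneg.2 h2),
    mul_nonneg (mul_nonneg hz.le (sub_nonneg.2 h1)) (sub_nonneg.2 h3),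
    mul_nonneg (mul_nonneg ha.le (sub_nonneg.2 h1)) (sub_nonneg.2 h3),
    mul_nonneg (mul_nonneg ha.le ha.le) (sub_nonneg.2 h3),
    mul_nonneg (mul_nonneg ha.le ha.le) (sub_nonneg.2 h2),
    mul_pos (mul_pos ha ha) ha, mul_pos (mul_pos hz hz) hz,
    mul_nonneg (mul_nonneg hz.le ha.le) (sub_nonneg.2 h2)]

theorem delta_reg_stokes_normal_eigenvalue_difference (δ : ℝ)
    (hδ : Real.sqrt (Real.exp 1) < δ) (ε : ℝ) (hε : 0 < ε) (k : ℕ) (hk : 1 ≤ k) :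
    |2 * π ^ 2 * ε * (k : ℝ) *
          ((4 * (besselK 1 (π * ε * (k : ℝ))) ^ 2 * besselK 2 (π * ε * (k : ℝ)) +
              π * ε * (k : ℝ) * besselK 1 (π * ε * (k : ℝ)) *
                ((besselK 1 (π * ε * (k : ℝ))) ^ 2 -
                  besselK 0 (π * ε * (k : ℝ)) * besselK 2 (π * ε * (k : ℝ)))) /
            (2 * besselK 0 (π * ε * (k : ℝ)) * besselK 1 (π * ε * (k : ℝ)) *
                besselK 2 (π * ε * (k : ℝ)) +
              π * ε * (k : ℝ) *
                ((besselK 1 (π * ε * (k : ℝ))) ^ 2 *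
                    (besselK 0 (π * ε * (k : ℝ)) + besselK 2 (π * ε * (k : ℝ))) -
                  2 * (besselK 0 (π * ε * (k : ℝ))) ^ 2 *
                    besselK 2 (π * ε * (k : ℝ))))) -
        8 * π / (1 + 2 * Real.log δ + 2 * besselK 0 (δ * π * ε * (k : ℝ)))| ≤
      3 * π * (1 + 8 / (3 * (1 + 2 * Real.log δ)) + π * ε * (k : ℝ)) := by
  have hk0 : (0:ℝ) < (k:ℝ) := by exact_mod_cast Nat.lt_of_lt_of_le Nat.zero_lt_one hk
  have hπ : (0:ℝ) < π := Real.pi_pos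
  set z := π * ε * (k:ℝ) with hzdef
  have hz : 0 < z := by positivity
  set a := besselK 0 z with hadef
  set b := besselK 1 z with hbdef
  set c := besselK 2 z with hcdef
  have ha : 0 < a := besselK_pos hz
  have hab : a ≤ b := besselK_zero_le_one hz
  have hb : 0 < b := lt_of_lt_of_le ha hab
  have hr1 : z * c = z * a + 2 * b := rel_R1 hz
  have hcs : z * b^2 ≤ z * a^2 + a * b := by
    have h := rel_CS hz
    nlinarith [mul_le_mul_of_nonneg_left h hz.le, hr1, ha.le]
  have h3 : 3*z*b ≤ 4*z^2*(b-a) + z*a + 2*b := by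
    have h := rel_H3 hz
    have h2 := rel_R2 hz
    -- multiply h by 4z, use h2 and hr1
    have h4 : 4*z*(c - 4*b + 3*a) ≤ 4*z*((1/4) * besselK 3 z - (1/4)*b - (1/2)*c + (1/2)*a) :=
      mul_le_mul_of_nonneg_left h (by positivity)
    -- 4z*RHS = z*K3 - z*b - 2*z*c + 2*z*a = (z*b + 4*c) - z*b - 2*z*c + 2*z*a
    have h5 : 4*z*c - 16*z*b + 12*z*a ≤ 4*c - 2*z*c + 2*z*a := by nlinarith [h4, h2]
    -- so 6*z*c + 10*z*a - 16*z*b ≤ 4*c ; multiply by z and use z*c = z*a+2*b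
    have h6 : z*(6*z*c + 10*z*a - 16*z*b) ≤ z*(4*c) := by
      refine mul_le_mul_of_nonneg_left ?_ hz.le
      linarith
    nlinarith [h6, hr1, mul_le_mul_of_nonneg_left hr1.le hz.le]
  -- numerator and denominator
  have eN : z * (4 * b ^ 2 * c + z * b * (b^2 - a*c)) = 2*z*a*b^2 + 8*b^3 + z^2*b*(b^2-a^2) := by
    linear_combination (4*b^2 - z*a*b) * hr1
  have eD : z * (2*a*b*c + z*(b^2*(a+c) - 2*a^2*c)) = 4*a*b^2 + 2*z*b^3 - 2*z*a^2*b + 2*z^2*a*b^2 - 2*z^2*a^3 := by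
    linear_combination (2*a*b + z*b^2 - 2*z*a^2) * hr1
  have hba2 : a^2 ≤ b^2 := by nlinarith
  have t1 : 0 ≤ z*b*(b^2-a^2) := mul_nonneg (mul_nonneg hz.le hb.le) (by linarith)
  have t2 : 0 ≤ z^2*a*(b^2-a^2) := mul_nonneg (mul_nonneg (sq_nonneg z) ha.le) (by linarith)
  have t3 : (0:ℝ) < 4*a*b^2 := by positivity
  have t4 : (0:ℝ) ≤ 2*z*a*b^2 := by positivity
  have t5 : (0:ℝ) ≤ 8*b^3 := by positivity
  have hNz : 0 ≤ 2*z*a*b^2 + 8*b^3 + z^2*b*(b^2-a^2) := by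
    nlinarith [mul_nonneg (mul_nonneg (sq_nonneg z) hb.le) (by linarith : (0:ℝ) ≤ b^2 - a^2)]
  have hDz : 0 < 4*a*b^2 + 2*z*b^3 - 2*z*a^2*b + 2*z^2*a*b^2 - 2*z^2*a^3 := by
    nlinarith [t1, t2, t3]
  have hN : 0 ≤ 4 * b ^ 2 * c + z * b * (b^2 - a*c) := by
    have h := hNz
    rw [← eN] at h
    have h0 : z * 0 ≤ z * (4 * b ^ 2 * c + z * b * (b^2 - a*c)) := by rw [mul_zero]; linarith
    exact le_of_mul_le_mul_left h0 hz
  have hD : 0 < 2*a*b*c + z*(b^2*(a+c) - 2*a^2*c) := by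
    have h := hDz
    rw [← eD] at h
    have h0 : z * 0 < z * (2*a*b*c + z*(b^2*(a+c) - 2*a^2*c)) := by rw [mul_zero]; linarith
    exact lt_of_mul_lt_mul_left h0 hz.le
  have key : 2*z*(4 * b ^ 2 * c + z * b * (b^2 - a*c)) ≤ 3*(1+z)*(2*a*b*c + z*(b^2*(a+c) - 2*a^2*c)) := by
    have hk2 := key_poly a b z ha hz hab hcs h3
    rw [← eN, ← eD] at hk2
    refine le_of_mul_le_mul_left ?_ hz
    nlinarith [hk2]
  -- bounds on lambda^n
  have h2pz : 2 * π ^ 2 * ε * (k:ℝ) = 2 * π * z := by rw [hzdef]; ring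
  have hlamN_nonneg : 0 ≤ 2 * π ^ 2 * ε * (k:ℝ) *
      ((4 * b ^ 2 * c + z * b * (b^2 - a*c)) / (2*a*b*c + z*(b^2*(a+c) - 2*a^2*c))) := by
    apply mul_nonneg (by positivity)
    exact div_nonneg hN hD.le
  have hlamN_le : 2 * π ^ 2 * ε * (k:ℝ) *
      ((4 * b ^ 2 * c + z * b * (b^2 - a*c)) / (2*a*b*c + z*(b^2*(a+c) - 2*a^2*c)))
      ≤ 3 * π * (1 + z) := by
    rw [h2pz, mul_div_assoc' (2*π*z), div_le_iff₀ hD]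
    nlinarith [mul_le_mul_of_nonneg_left key hπ.le]
  -- bounds on lambda^delta
  have hlogδ : 1/2 < Real.log δ := by
    have he : Real.sqrt (Real.exp 1) = Real.exp (1/2) := by
      rw [← Real.exp_half]
    have hδ0 : 0 < δ := lt_trans (by rw [he]; exact Real.exp_pos _) hδ
    have := Real.log_lt_log (by rw [he]; exact Real.exp_pos _) hδ
    rwa [he, Real.log_exp] at this
  have hKd : 0 ≤ besselK 0 (δ * π * ε * (k:ℝ)) := besselK_nonneg _ _
  have hden : 0 < 1 + 2 * Real.log δ := by linarith
  have hden2 : 0 < 1 + 2 * Real.log δ + 2 * besselK 0 (δ * π * ε * (k:ℝ)) := by linarith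
  have hL_nonneg : 0 ≤ 8 * π / (1 + 2 * Real.log δ + 2 * besselK 0 (δ * π * ε * (k:ℝ))) := by
    positivity
  have hL_le : 8 * π / (1 + 2 * Real.log δ + 2 * besselK 0 (δ * π * ε * (k:ℝ)))
      ≤ 8 * π / (1 + 2 * Real.log δ) := by
    exact div_le_div_of_nonneg_left (by positivity) hden (by linarith)
  have hRHS : 3 * π * (1 + 8 / (3 * (1 + 2 * Real.log δ)) + z)
      = 3 * π * (1 + z) + 8 * π / (1 + 2 * Real.log δ) := by
    field_simp
    ring
  rw [hRHS, abs_le]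
  constructor <;> linarith
end
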